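/- arXiv:1902.00947 — 6 statements merged into one kernel-verified Lean document; each statement's English description precedes it below -/
import Mathlib

section
/- Let f : ℝ^d → ℝ be convex and L-smooth with minimizer x⋆, and let x_{k+1} = x_k - (1/L) f'(x_k). Then for any b_k, d_k ≥ 0, setting d_{k+1} = d_k + 2L and b_{k+1} = b_k + 2 + d_k/L, the potential φ_k = d_k (f(x_k) - f(x⋆)) + b_k ‖f'(x_k)‖² + L² ‖x_k - x⋆‖² satisfies φ_{k+1} ≤ φ_k. -/
open Finset
open scoped InnerProductSpace RealInnerProductSpace

variable {d : ℕ}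

local notation "E" => EuclideanSpace ℝ (Fin d)

lemma gd_line_hasDerivAt (f : E → ℝ) (f' : E → E)
    (hgrad : ∀ x, HasGradientAt f (f' x) x) (x v : E) (t : ℝ) :
    HasDerivAt (fun s : ℝ => f (x + s • v)) ⟪f' (x + t • v), v⟫_ℝ t := by
  have hline : HasDerivAt (fun s : ℝ => x + s • v) v t := by
    simpa using ((hasDerivAt_id t).smul_const v).const_add x
  have := (hasGradientAt_iff_hasFDerivAt.mp (hgrad (x + t • v))).comp_hasDerivAt t hline
  simpa [InnerProductSpace.toDual_apply_apply, Function.comp_def] using this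

lemma gd_grad_ineq (f : E → ℝ) (f' : E → E)
    (hgrad : ∀ x, HasGradientAt f (f' x) x) (hconv : ConvexOn ℝ Set.univ f)
    (x y : E) : f x + ⟪f' x, y - x⟫_ℝ ≤ f y := by
  set v := y - x with hv
  have hg : ConvexOn ℝ (Set.univ : Set ℝ) (fun t : ℝ => f (x + t • v)) := by
    refine ⟨convex_univ, fun t₁ _ t₂ _ a b ha hb hab => ?_⟩
    have h := hconv.2 (Set.mem_univ (x + t₁ • v)) (Set.mem_univ (x + t₂ • v)) ha hb hab
    have heq : x + (a * t₁ + b * t₂) • v = a • (x + t₁ • v) + b • (x + t₂ • v) := by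
      match_scalars <;> linarith
    simpa [heq] using h
  have hd := gd_line_hasDerivAt f f' hgrad x v 0
  have hs := hg.le_slope_of_hasDerivAt (Set.mem_univ (0:ℝ)) (Set.mem_univ (1:ℝ))
    zero_lt_one hd
  rw [slope_def_field] at hs
  simp only [zero_smul, add_zero, one_smul] at hs hd ⊢
  have : x + v = y := by rw [hv]; abel
  rw [this] at hs
  rw [show (1:ℝ)-0 = 1 by norm_num, div_one] at hs
  linarith

lemma gd_descent (L : ℝ) (hL : 0 < L) (f : E → ℝ) (f' : E → E)
    (hgrad : ∀ x, HasGradientAt f (f' x) x)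
    (hsmooth : ∀ x y, ‖f' x - f' y‖ ≤ L * ‖x - y‖)
    (x y : E) : f y ≤ f x + ⟪f' x, y - x⟫_ℝ + L / 2 * ‖y - x‖ ^ 2 := by
  set v := y - x with hv
  have hcont : Continuous f' := by
    have hlip : LipschitzWith (Real.toNNReal L) f' := by
      apply LipschitzWith.of_dist_le_mul
      intro a b
      simpa [dist_eq_norm, Real.coe_toNNReal L hL.le] using hsmooth a b
    exact hlip.continuous
  have hderiv : ∀ t ∈ Set.uIcc (0:ℝ) 1,
      HasDerivAt (fun s : ℝ => f (x + s • v)) ⟪f' (x + t • v), v⟫_ℝ t :=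
    fun t _ => gd_line_hasDerivAt f f' hgrad x v t
  have hcont2 : Continuous fun t : ℝ => ⟪f' (x + t • v), v⟫_ℝ :=
    Continuous.inner (hcont.comp (continuous_const.add (continuous_id'.smul continuous_const))) continuous_const
  have hint : IntervalIntegrable (fun t : ℝ => ⟪f' (x + t • v), v⟫_ℝ)
      MeasureTheory.volume 0 1 := hcont2.intervalIntegrable 0 1
  have hftc := intervalIntegral.integral_eq_sub_of_hasDerivAt hderiv hint
  have hmono : ∫ t in (0:ℝ)..1, ⟪f' (x + t • v), v⟫_ℝ
      ≤ ∫ t in (0:ℝ)..1, (⟪f' x, v⟫_ℝ + L * t * ‖v‖^2) := by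
    apply intervalIntegral.integral_mono_on zero_le_one hint
    · exact (continuous_const.add ((continuous_const.mul continuous_id').mul continuous_const)).intervalIntegrable 0 1
    · intro t ht
      have h1 : ⟪f' (x + t • v) - f' x, v⟫_ℝ ≤ ‖f' (x + t • v) - f' x‖ * ‖v‖ :=
        real_inner_le_norm _ _
      have h2 : ‖f' (x + t • v) - f' x‖ ≤ L * (t * ‖v‖) := by
        have h := hsmooth (x + t • v) x
        simpa [norm_smul, abs_of_nonneg ht.1, mul_assoc] using h
      have h3 : ‖f' (x + t • v) - f' x‖ * ‖v‖ ≤ L * (t * ‖v‖) * ‖v‖ :=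
        mul_le_mul_of_nonneg_right h2 (norm_nonneg v)
      rw [inner_sub_left] at h1
      nlinarith [norm_nonneg v]
  have hval : ∫ t in (0:ℝ)..1, (⟪f' x, v⟫_ℝ + L * t * ‖v‖^2)
      = ⟪f' x, v⟫_ℝ + L / 2 * ‖v‖^2 := by
    have hfun : (fun t : ℝ => ⟪f' x, v⟫_ℝ + L * t * ‖v‖^2)
        = fun t : ℝ => ⟪f' x, v⟫_ℝ + (L * ‖v‖^2) * t := by funext t; ring
    rw [hfun, intervalIntegral.integral_add (g := fun t : ℝ => L * ‖v‖ ^ 2 * t) intervalIntegrable_const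
      ((continuous_const.mul continuous_id').intervalIntegrable 0 1 : IntervalIntegrable (fun t : ℝ => L * ‖v‖ ^ 2 * t) MeasureTheory.volume 0 1),
      intervalIntegral.integral_const_mul]
    simp [integral_id]
    ring
  have hys : x + (1:ℝ) • v = y := by rw [hv]; simp
  have hxs : x + (0:ℝ) • v = x := by simp
  rw [hys, hxs] at hftc
  linarith

lemma gd_interp (L : ℝ) (hL : 0 < L) (f : E → ℝ) (f' : E → E)
    (hgrad : ∀ x, HasGradientAt f (f' x) x) (hconv : ConvexOn ℝ Set.univ f)
    (hsmooth : ∀ x y, ‖f' x - f' y‖ ≤ L * ‖x - y‖)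
    (x y : E) :
    2 * L * f y + 2 * L * ⟪f' y, x - y⟫_ℝ + ‖f' x - f' y‖ ^ 2 ≤ 2 * L * f x := by
  have hL' : L ≠ 0 := ne_of_gt hL
  set u := f' x - f' y with hu
  set z := x - (1 / L) • u with hz
  have h1 := gd_grad_ineq f f' hgrad hconv y z
  have h2 := gd_descent L hL f f' hgrad hsmooth x z
  have hzx : z - x = -((1 / L) • u) := by rw [hz]; abel
  have hzy : z - y = (x - y) - (1 / L) • u := by rw [hz]; abel
  have e1 : ⟪f' y, z - y⟫_ℝ = ⟪f' y, x - y⟫_ℝ - (1 / L) * ⟪f' y, u⟫_ℝ := by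
    rw [hzy, inner_sub_right, real_inner_smul_right]
  have e2 : ⟪f' x, z - x⟫_ℝ = -((1 / L) * ⟪f' x, u⟫_ℝ) := by
    rw [hzx, inner_neg_right, real_inner_smul_right]
  have e3 : ‖z - x‖ ^ 2 = (1 / L) ^ 2 * ‖u‖ ^ 2 := by
    rw [hzx, norm_neg, norm_smul]
    rw [Real.norm_eq_abs, abs_of_pos (by positivity : (0:ℝ) < 1 / L)]
    ring
  have e4 : ⟪f' x, u⟫_ℝ - ⟪f' y, u⟫_ℝ = ‖u‖ ^ 2 := by
    rw [← inner_sub_left, ← hu, real_inner_self_eq_norm_sq]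
  rw [e1] at h1
  rw [e2, e3] at h2
  have hco : L / 2 * ((1 / L) ^ 2 * ‖u‖ ^ 2) = 1 / (2 * L) * ‖u‖ ^ 2 := by
    field_simp
  rw [hco] at h2
  have hc12 : (1 / L) * ⟪f' x, u⟫_ℝ - (1 / L) * ⟪f' y, u⟫_ℝ = (1 / L) * ‖u‖ ^ 2 := by
    rw [← mul_sub, e4]
  have ht : (1 / L) * ‖u‖ ^ 2 - 1 / (2 * L) * ‖u‖ ^ 2 = 1 / (2 * L) * ‖u‖ ^ 2 := by
    field_simp; ring
  have hkey : f y + ⟪f' y, x - y⟫_ℝ + 1 / (2 * L) * ‖u‖ ^ 2 ≤ f x := by linarith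
  have hmul := mul_le_mul_of_nonneg_left hkey (by positivity : (0:ℝ) ≤ 2 * L)
  have hee : 2 * L * (1 / (2 * L) * ‖u‖ ^ 2) = ‖u‖ ^ 2 := by field_simp
  nlinarith [hmul, hee]

/-- Potential decrease for gradient descent on an L-smooth convex function. -/
theorem gd_potential_decrease {d : ℕ} (L : ℝ) (hL : 0 < L)
    (f : EuclideanSpace ℝ (Fin d) → ℝ)
    (f' : EuclideanSpace ℝ (Fin d) → EuclideanSpace ℝ (Fin d))
    (hgrad : ∀ x, HasGradientAt f (f' x) x)
    (hconv : ConvexOn ℝ Set.univ f)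
    (hsmooth : ∀ x y, ‖f' x - f' y‖ ≤ L * ‖x - y‖)
    (xstar : EuclideanSpace ℝ (Fin d)) (hmin : ∀ y, f xstar ≤ f y)
    (bk dk : ℝ) (hbk : 0 ≤ bk) (hdk : 0 ≤ dk)
    (xk xk1 : EuclideanSpace ℝ (Fin d))
    (hstep : xk1 = xk - (1 / L) • f' xk) :
    (dk + 2 * L) * (f xk1 - f xstar) + (bk + 2 + dk / L) * ‖f' xk1‖ ^ 2
        + L ^ 2 * ‖xk1 - xstar‖ ^ 2
      ≤ dk * (f xk - f xstar) + bk * ‖f' xk‖ ^ 2 + L ^ 2 * ‖xk - xstar‖ ^ 2 := by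
  have hL' : L ≠ 0 := ne_of_gt hL
  -- gradient vanishes at the minimizer
  have hstar : f' xstar = 0 := by
    have hloc : IsLocalMin f xstar := Filter.Eventually.of_forall hmin
    have h0 := hloc.hasFDerivAt_eq_zero (hasGradientAt_iff_hasFDerivAt.mp (hgrad xstar))
    exact (InnerProductSpace.toDual ℝ (EuclideanSpace ℝ (Fin d))).map_eq_zero_iff.mp h0
  set a := ‖f' xk‖ ^ 2 with ha
  set b := ‖f' xk1‖ ^ 2 with hb
  set c := ⟪f' xk, f' xk1⟫_ℝ with hc
  set s := ⟪f' xk, xk - xstar⟫_ℝ with hs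
  -- step identities
  have hx01 : xk - xk1 = (1 / L) • f' xk := by rw [hstep]; abel
  have hx10 : xk1 - xk = -((1 / L) • f' xk) := by rw [hstep]; abel
  -- inequality A : between xk and xk1
  have hA := gd_interp L hL f f' hgrad hconv hsmooth xk xk1
  have eA1 : ⟪f' xk1, xk - xk1⟫_ℝ = (1 / L) * c := by
    rw [hx01, real_inner_smul_right, hc, real_inner_comm]
  have eA2 : ‖f' xk - f' xk1‖ ^ 2 = a - 2 * c + b := by
    rw [norm_sub_sq_real, ← ha, ← hb, ← hc]
  rw [eA1, eA2] at hA
  have eLdiv : 2 * L * ((1 / L) * c) = 2 * c := by field_simp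
  rw [eLdiv] at hA
  -- hA : 2*L*f xk1 + 2*c + (a - 2*c + b) ≤ 2*L*f xk
  -- inequality D : between xk1 and xk
  have hD := gd_interp L hL f f' hgrad hconv hsmooth xk1 xk
  have eD1 : ⟪f' xk, xk1 - xk⟫_ℝ = -((1 / L) * a) := by
    rw [hx10, inner_neg_right, real_inner_smul_right, ha, real_inner_self_eq_norm_sq]
  have eD2 : ‖f' xk1 - f' xk‖ ^ 2 = b - 2 * c + a := by
    rw [norm_sub_sq_real, ← ha, ← hb, real_inner_comm, ← hc]
  rw [eD1, eD2] at hD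
  have eLdiv2 : 2 * L * -((1 / L) * a) = -(2 * a) := by field_simp
  rw [eLdiv2] at hD
  -- inequality C : between xstar and xk
  have hC := gd_interp L hL f f' hgrad hconv hsmooth xstar xk
  have eC1 : ⟪f' xk, xstar - xk⟫_ℝ = -s := by
    rw [hs, ← inner_neg_right]; congr 1; abel
  have eC2 : ‖f' xstar - f' xk‖ ^ 2 = a := by rw [hstar, zero_sub, norm_neg, ← ha]
  rw [eC1, eC2] at hC
  -- hC : 2*L*f xk + 2*L*(-s) + a ≤ 2*L*f xstar
  -- cocoercivity: b ≤ c, hence b ≤ a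
  have hbc : b ≤ c := by linarith
  have hCS : c ≤ ‖f' xk‖ * ‖f' xk1‖ := real_inner_le_norm _ _
  have hba : b ≤ a := by
    nlinarith [sq_nonneg (‖f' xk‖ - ‖f' xk1‖), norm_nonneg (f' xk), norm_nonneg (f' xk1)]
  -- distance expansion
  have hx1s : xk1 - xstar = (xk - xstar) - (1 / L) • f' xk := by rw [hstep]; abel
  have hN : L ^ 2 * ‖xk1 - xstar‖ ^ 2 = L ^ 2 * ‖xk - xstar‖ ^ 2 - 2 * L * s + a := by
    rw [hx1s, norm_sub_sq_real, real_inner_smul_right, norm_smul, Real.norm_eq_abs,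
      abs_of_pos (by positivity : (0:ℝ) < 1 / L), real_inner_comm, ← hs, mul_pow, ← ha]
    field_simp
  -- replace dk / L
  set e := dk / L with he
  have he0 : 0 ≤ e := div_nonneg hdk hL.le
  have hdke : dk = e * L := by rw [he]; field_simp
  rw [hN, hdke]
  -- final linear combination
  have u2 := mul_le_mul_of_nonneg_left hA he0
  have u4 := mul_le_mul_of_nonneg_left hba hbk
  have u5 := mul_le_mul_of_nonneg_left hba he0
  linarith [hA, hC, u2, u4, u5, hba]
end

section
/- For gradient descent x_{k+1} = x_k - (1/L) f'(x_k) on an L-smooth convex function f with minimizer x⋆, after N steps one has simultaneously f(x_N) - f(x⋆) ≤ L‖x_0 - x⋆‖²/(2N+1) and ‖f'(x_N)‖² ≤ L²‖x_0 - x⋆‖²/(N(N+2)). -/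
open Finset

section Aux

open RealInnerProductSpace

variable {d : ℕ} {L : ℝ}

local notation "E" => EuclideanSpace ℝ (Fin d)

/-- Derivative of `f` along a line. -/
lemma hasDerivAt_line (f : EuclideanSpace ℝ (Fin d) → ℝ) (f' : EuclideanSpace ℝ (Fin d) → EuclideanSpace ℝ (Fin d))
    (hgrad : ∀ z, HasGradientAt f (f' z) z) (x y : EuclideanSpace ℝ (Fin d)) (t : ℝ) :
    HasDerivAt (fun τ : ℝ => f (x + τ • (y - x))) ⟪f' (x + t • (y - x)), y - x⟫ t := by
  have hc : HasDerivAt (fun τ : ℝ => x + τ • (y - x)) (y - x) t := by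
    simpa using ((hasDerivAt_id t).smul_const (y - x)).const_add x
  have hf := (hgrad (x + t • (y - x))).hasFDerivAt
  exact (hf.comp_hasDerivAt t hc).congr_deriv (by simp [InnerProductSpace.toDual_apply_apply])

/-- Convexity lower bound. -/
lemma convex_lower (f : EuclideanSpace ℝ (Fin d) → ℝ) (f' : EuclideanSpace ℝ (Fin d) → EuclideanSpace ℝ (Fin d))
    (hgrad : ∀ z, HasGradientAt f (f' z) z) (hconv : ConvexOn ℝ Set.univ f)
    (x y : EuclideanSpace ℝ (Fin d)) :
    f x + ⟪f' x, y - x⟫ ≤ f y := by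
  have hline : ConvexOn ℝ Set.univ (fun τ : ℝ => f (x + τ • (y - x))) := by
    have h := hconv.comp_affineMap (AffineMap.lineMap x y)
    have : (fun τ : ℝ => f (x + τ • (y - x))) = (f ∘ (AffineMap.lineMap x y)) := by
      funext τ
      simp [AffineMap.lineMap_apply, add_comm]
    rw [this]
    simpa using h
  have h0 := hasDerivAt_line f f' hgrad x y 0
  have hslope := hline.le_slope_of_hasDerivAt (Set.mem_univ (0:ℝ)) (Set.mem_univ (1:ℝ))
    one_pos (by simpa using h0)
  rw [slope_def_field] at hslope
  simp only [zero_smul, add_zero, one_smul] at hslope h0 ⊢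
  have h1 : x + (y - x) = y := by abel
  rw [h1] at hslope
  have : ⟪f' x, y - x⟫ ≤ f y - f x := by
    simpa using hslope
  linarith

/-- Descent lemma (quadratic upper bound from Lipschitz gradients). -/
lemma descent_lemma (hL : 0 < L) (f : EuclideanSpace ℝ (Fin d) → ℝ)
    (f' : EuclideanSpace ℝ (Fin d) → EuclideanSpace ℝ (Fin d))
    (hgrad : ∀ z, HasGradientAt f (f' z) z)
    (hsmooth : ∀ a b, ‖f' a - f' b‖ ≤ L * ‖a - b‖)
    (x y : EuclideanSpace ℝ (Fin d)) :
    f y ≤ f x + ⟪f' x, y - x⟫ + L / 2 * ‖y - x‖ ^ 2 := by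
  set ψ : ℝ → ℝ := fun τ => f (x + τ • (y - x)) - τ * ⟪f' x, y - x⟫ - L / 2 * τ ^ 2 * ‖y - x‖ ^ 2 with hψ
  have hψd : ∀ t : ℝ, HasDerivAt ψ
      (⟪f' (x + t • (y - x)), y - x⟫ - ⟪f' x, y - x⟫ - L * t * ‖y - x‖ ^ 2) t := by
    intro t
    have h1 := hasDerivAt_line f f' hgrad x y t
    have h2 : HasDerivAt (fun τ : ℝ => τ * ⟪f' x, y - x⟫) ⟪f' x, y - x⟫ t := by
      simpa using (hasDerivAt_id t).mul_const (⟪f' x, y - x⟫)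
    have h3 : HasDerivAt (fun τ : ℝ => L / 2 * τ ^ 2 * ‖y - x‖ ^ 2)
        (L * t * ‖y - x‖ ^ 2) t := by
      have h4 := ((hasDerivAt_pow 2 t).const_mul (L / 2)).mul_const (‖y - x‖ ^ 2)
      refine h4.congr_deriv ?_
      rw [show (2:ℕ) - 1 = 1 from rfl, pow_one]
      push_cast
      ring
    exact (h1.sub h2).sub h3
  have hanti : AntitoneOn ψ (Set.Icc 0 1) := by
    apply antitoneOn_of_deriv_nonpos (convex_Icc 0 1)
    · exact fun t _ => ((hψd t).differentiableAt).continuousAt.continuousWithinAt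
    · intro t _
      exact ((hψd t).differentiableAt).differentiableWithinAt
    · intro t ht
      rw [interior_Icc] at ht
      rw [(hψd t).deriv]
      have hb : ⟪f' (x + t • (y - x)) - f' x, y - x⟫ ≤ L * t * ‖y - x‖ ^ 2 := by
        calc ⟪f' (x + t • (y - x)) - f' x, y - x⟫ ≤ ‖f' (x + t • (y - x)) - f' x‖ * ‖y - x‖ :=
              real_inner_le_norm _ _
          _ ≤ (L * ‖(x + t • (y - x)) - x‖) * ‖y - x‖ :=
              mul_le_mul_of_nonneg_right (hsmooth _ _) (norm_nonneg _)
          _ = L * t * ‖y - x‖ ^ 2 := by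
              have : (x + t • (y - x)) - x = t • (y - x) := by abel
              rw [this, norm_smul, Real.norm_eq_abs, abs_of_pos ht.1]
              ring
      rw [inner_sub_left] at hb
      linarith
  have h01 := hanti (Set.mem_Icc.2 ⟨le_refl 0, zero_le_one⟩) (Set.mem_Icc.2 ⟨zero_le_one, le_refl 1⟩) zero_le_one
  have hψ1 : ψ 1 = f y - ⟪f' x, y - x⟫ - L / 2 * ‖y - x‖ ^ 2 := by
    have h1 : x + (1:ℝ) • (y - x) = y := by simp
    simp [hψ, h1]
  have hψ0 : ψ 0 = f x := by simp [hψ]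
  rw [hψ1, hψ0] at h01
  linarith

/-- Interpolation inequality for smooth convex functions (2L-scaled form). -/
lemma interp (hL : 0 < L) (f : EuclideanSpace ℝ (Fin d) → ℝ)
    (f' : EuclideanSpace ℝ (Fin d) → EuclideanSpace ℝ (Fin d))
    (hgrad : ∀ z, HasGradientAt f (f' z) z) (hconv : ConvexOn ℝ Set.univ f)
    (hsmooth : ∀ a b, ‖f' a - f' b‖ ≤ L * ‖a - b‖)
    (x y : EuclideanSpace ℝ (Fin d)) :
    2 * L * f y + 2 * L * ⟪f' y, x - y⟫ + ‖f' x - f' y‖ ^ 2 ≤ 2 * L * f x := by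
  have hL0 : L ≠ 0 := ne_of_gt hL
  set u : EuclideanSpace ℝ (Fin d) := f' x - f' y with hu
  set z : EuclideanSpace ℝ (Fin d) := x - (1 / L) • u with hz
  have hd := descent_lemma hL f f' hgrad hsmooth x z
  have hcv := convex_lower f f' hgrad hconv y z
  have hzx : z - x = -((1 / L) • u) := by rw [hz]; abel
  have e1 : L * ⟪f' x, z - x⟫ = -⟪f' x, u⟫ := by
    rw [hzx, inner_neg_right, real_inner_smul_right]
    field_simp
  have e2 : L ^ 2 * ‖z - x‖ ^ 2 = ‖u‖ ^ 2 := by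
    rw [hzx, norm_neg, norm_smul, Real.norm_eq_abs, mul_pow, sq_abs]
    field_simp
  have e3 : L * ⟪f' y, z - y⟫ = L * ⟪f' y, x - y⟫ - ⟪f' y, u⟫ := by
    have : z - y = (x - y) - (1 / L) • u := by rw [hz]; abel
    rw [this, inner_sub_right, real_inner_smul_right]
    field_simp
  have e4 : ⟪f' x, u⟫ - ⟪f' y, u⟫ = ‖u‖ ^ 2 := by
    rw [← inner_sub_left, ← hu, real_inner_self_eq_norm_sq]
  have hd2 : 2 * L * f z ≤ 2 * L * (f x + ⟪f' x, z - x⟫ + L / 2 * ‖z - x‖ ^ 2) :=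
    mul_le_mul_of_nonneg_left hd (by positivity)
  have hcv2 : 2 * L * (f y + ⟪f' y, z - y⟫) ≤ 2 * L * f z :=
    mul_le_mul_of_nonneg_left hcv (by positivity)
  have expand1 : 2 * L * (f x + ⟪f' x, z - x⟫ + L / 2 * ‖z - x‖ ^ 2)
      = 2 * L * f x + 2 * (L * ⟪f' x, z - x⟫) + L ^ 2 * ‖z - x‖ ^ 2 := by ring
  have expand2 : 2 * L * (f y + ⟪f' y, z - y⟫) = 2 * L * f y + 2 * (L * ⟪f' y, z - y⟫) := by ring
  rw [expand1, e1, e2] at hd2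
  rw [expand2, e3] at hcv2
  linarith

/-- Scalar certificate for the generic potential step. -/
lemma step2 (k F0 F1 Fs s t p u w w' : ℝ) (hk : 0 ≤ k)
    (hq1 : 2 * L * F0 - 2 * s + (s - 2 * p + t) ≤ 2 * L * F1)
    (hq2 : 2 * L * F1 + 2 * p + (s - 2 * p + t) ≤ 2 * L * F0)
    (hq5 : 2 * L * F0 - 2 * L * u + s ≤ 2 * L * Fs)
    (hst : 0 ≤ s - 2 * p + t)
    (hw : L ^ 2 * w' = L ^ 2 * w - 2 * L * u + s) :
    (2 * k + 2) * L * (F1 - Fs) + (k + 1) * (k + 2) * t + L ^ 2 * w'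
      ≤ 2 * k * L * (F0 - Fs) + k * (k + 1) * s + L ^ 2 * w := by
  have h1 : 0 ≤ (k + 1) ^ 2 * (2 * L * F1 - (2 * L * F0 - 2 * s + (s - 2 * p + t))) :=
    mul_nonneg (by positivity) (by linarith)
  have h2 : 0 ≤ ((k + 1) ^ 2 + (k + 1)) * (2 * L * F0 - (2 * L * F1 + 2 * p + (s - 2 * p + t))) :=
    mul_nonneg (by positivity) (by linarith)
  have h5 : 0 ≤ 2 * L * Fs - (2 * L * F0 - 2 * L * u + s) := by linarith
  have hX : 0 ≤ (k + 1) ^ 2 * (s - 2 * p + t) := mul_nonneg (by positivity) hst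
  nlinarith [h1, h2, h5, hX, hw]

/-- Scalar certificate for the final potential step. -/
lemma stepFinal (m F0 F1 Fs s t p u w w' : ℝ) (hm : 0 ≤ m)
    (hq1 : 2 * L * F0 - 2 * s + (s - 2 * p + t) ≤ 2 * L * F1)
    (hq2 : 2 * L * F1 + 2 * p + (s - 2 * p + t) ≤ 2 * L * F0)
    (hq5 : 2 * L * F0 - 2 * L * u + s ≤ 2 * L * Fs)
    (hq4 : 2 * L * Fs + t ≤ 2 * L * F1)
    (hst : 0 ≤ s - 2 * p + t)
    (hw : L ^ 2 * w' = L ^ 2 * w - 2 * L * u + s) :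
    (m + 1) * (m + 3) * t + L ^ 2 * w'
      ≤ 2 * m * L * (F0 - Fs) + m * (m + 1) * s + L ^ 2 * w := by
  have h1 : 0 ≤ (m + 1) ^ 2 * (2 * L * F1 - (2 * L * F0 - 2 * s + (s - 2 * p + t))) :=
    mul_nonneg (by positivity) (by linarith)
  have h2 : 0 ≤ ((m + 1) ^ 2 + (m + 1)) * (2 * L * F0 - (2 * L * F1 + 2 * p + (s - 2 * p + t))) :=
    mul_nonneg (by positivity) (by linarith)
  have h5 : 0 ≤ 2 * L * Fs - (2 * L * F0 - 2 * L * u + s) := by linarith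
  have h4 : 0 ≤ (m + 1) * (2 * L * F1 - (2 * L * Fs + t)) :=
    mul_nonneg (by positivity) (by linarith)
  have hX : 0 ≤ (m + 1) ^ 2 * (s - 2 * p + t) := mul_nonneg (by positivity) hst
  nlinarith [h1, h2, h5, h4, hX, hw]

/-- Squared-norm expansion for the gradient step. -/
lemma exp_sq (hL : 0 < L) (a b : EuclideanSpace ℝ (Fin d)) :
    L ^ 2 * ‖a - (1 / L) • b‖ ^ 2 = L ^ 2 * ‖a‖ ^ 2 - 2 * L * ⟪b, a⟫ + ‖b‖ ^ 2 := by
  have hL0 : L ≠ 0 := ne_of_gt hL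
  rw [norm_sub_sq_real, real_inner_smul_right, norm_smul, Real.norm_eq_abs,
    abs_of_pos (by positivity : (0:ℝ) < 1 / L), real_inner_comm]
  field_simp

end Aux

open RealInnerProductSpace in
/-- Simultaneous function-value and gradient-norm rates for gradient descent. -/
theorem gd_rates {d : ℕ} (L : ℝ) (hL : 0 < L)
    (f : EuclideanSpace ℝ (Fin d) → ℝ)
    (f' : EuclideanSpace ℝ (Fin d) → EuclideanSpace ℝ (Fin d))
    (hgrad : ∀ x, HasGradientAt f (f' x) x)
    (hconv : ConvexOn ℝ Set.univ f)
    (hsmooth : ∀ x y, ‖f' x - f' y‖ ≤ L * ‖x - y‖)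
    (xstar : EuclideanSpace ℝ (Fin d)) (hmin : ∀ y, f xstar ≤ f y)
    (x : ℕ → EuclideanSpace ℝ (Fin d))
    (hstep : ∀ k, x (k + 1) = x k - (1 / L) • f' (x k))
    (N : ℕ) (hN : 0 < N) :
    f (x N) - f xstar ≤ L * ‖x 0 - xstar‖ ^ 2 / (2 * (N : ℝ) + 1) ∧
    ‖f' (x N)‖ ^ 2 ≤ L ^ 2 * ‖x 0 - xstar‖ ^ 2 / ((N : ℝ) * ((N : ℝ) + 2)) := by
  have hL0 : L ≠ 0 := ne_of_gt hL
  -- gradient at minimizer is zero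
  have hgstar : f' xstar = 0 := by
    have hloc : IsLocalMin f xstar := Filter.Eventually.of_forall hmin
    have h0 := hloc.hasFDerivAt_eq_zero (hgrad xstar).hasFDerivAt
    have := congrArg (InnerProductSpace.toDual ℝ (EuclideanSpace ℝ (Fin d))).symm h0
    simpa using this
  have key := interp hL f f' hgrad hconv hsmooth
  -- handy abbreviations (scalars)
  -- facts per step
  have hdiff : ∀ k : ℕ, x (k+1) - x k = -((1/L) • f' (x k)) := by
    intro k; rw [hstep k]; abel
  have hq1 : ∀ k : ℕ, 2 * L * f (x k) - 2 * ‖f' (x k)‖ ^ 2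
      + (‖f' (x k)‖ ^ 2 - 2 * ⟪f' (x k), f' (x (k+1))⟫ + ‖f' (x (k+1))‖ ^ 2)
      ≤ 2 * L * f (x (k+1)) := by
    intro k
    have h := key (x (k+1)) (x k)
    have e : 2 * L * ⟪f' (x k), x (k+1) - x k⟫ = -(2 * ‖f' (x k)‖ ^ 2) := by
      rw [hdiff k, inner_neg_right, real_inner_smul_right, real_inner_self_eq_norm_sq]
      field_simp
    have e2 : ‖f' (x (k+1)) - f' (x k)‖ ^ 2
        = ‖f' (x k)‖ ^ 2 - 2 * ⟪f' (x k), f' (x (k+1))⟫ + ‖f' (x (k+1))‖ ^ 2 := by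
      rw [norm_sub_sq_real, real_inner_comm]
      ring
    have h' : 2 * L * f (x k) + 2 * L * ⟪f' (x k), x (k+1) - x k⟫
        + ‖f' (x (k+1)) - f' (x k)‖ ^ 2 ≤ 2 * L * f (x (k+1)) := h
    rw [e, e2] at h'
    linarith
  have hq2 : ∀ k : ℕ, 2 * L * f (x (k+1)) + 2 * ⟪f' (x k), f' (x (k+1))⟫
      + (‖f' (x k)‖ ^ 2 - 2 * ⟪f' (x k), f' (x (k+1))⟫ + ‖f' (x (k+1))‖ ^ 2)
      ≤ 2 * L * f (x k) := by
    intro k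
    have h := key (x k) (x (k+1))
    have e : 2 * L * ⟪f' (x (k+1)), x k - x (k+1)⟫ = 2 * ⟪f' (x k), f' (x (k+1))⟫ := by
      have : x k - x (k+1) = (1/L) • f' (x k) := by rw [hstep k]; abel
      rw [this, real_inner_smul_right, real_inner_comm]
      field_simp
    have e2 : ‖f' (x k) - f' (x (k+1))‖ ^ 2
        = ‖f' (x k)‖ ^ 2 - 2 * ⟪f' (x k), f' (x (k+1))⟫ + ‖f' (x (k+1))‖ ^ 2 := by
      rw [norm_sub_sq_real]
    have h' : 2 * L * f (x (k+1)) + 2 * L * ⟪f' (x (k+1)), x k - x (k+1)⟫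
        + ‖f' (x k) - f' (x (k+1))‖ ^ 2 ≤ 2 * L * f (x k) := h
    rw [e, e2] at h'
    linarith
  have hq5 : ∀ k : ℕ, 2 * L * f (x k) - 2 * L * ⟪f' (x k), x k - xstar⟫ + ‖f' (x k)‖ ^ 2
      ≤ 2 * L * f xstar := by
    intro k
    have h := key xstar (x k)
    have e : ⟪f' (x k), xstar - x k⟫ = -⟪f' (x k), x k - xstar⟫ := by
      rw [← inner_neg_right]; congr 1; abel
    rw [hgstar] at h
    simp only [zero_sub, norm_neg] at h
    rw [e] at h
    linarith
  have hq4 : ∀ k : ℕ, 2 * L * f xstar + ‖f' (x k)‖ ^ 2 ≤ 2 * L * f (x k) := by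
    intro k
    have h := key (x k) xstar
    rw [hgstar] at h
    simp only [inner_zero_left, sub_zero, mul_zero, add_zero] at h
    linarith
  have hwrec : ∀ k : ℕ, L ^ 2 * ‖x (k+1) - xstar‖ ^ 2
      = L ^ 2 * ‖x k - xstar‖ ^ 2 - 2 * L * ⟪f' (x k), x k - xstar⟫ + ‖f' (x k)‖ ^ 2 := by
    intro k
    have e : x (k+1) - xstar = (x k - xstar) - (1/L) • f' (x k) := by rw [hstep k]; abel
    rw [e, exp_sq hL, real_inner_comm]
  have hst : ∀ k : ℕ, 0 ≤ ‖f' (x k)‖ ^ 2 - 2 * ⟪f' (x k), f' (x (k+1))⟫ + ‖f' (x (k+1))‖ ^ 2 := by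
    intro k
    have : ‖f' (x k) - f' (x (k+1))‖ ^ 2
        = ‖f' (x k)‖ ^ 2 - 2 * ⟪f' (x k), f' (x (k+1))⟫ + ‖f' (x (k+1))‖ ^ 2 :=
      norm_sub_sq_real _ _
    rw [← this]; positivity
  -- monotone decrease of function values
  have hmono : ∀ k : ℕ, f (x (k+1)) ≤ f (x k) := by
    intro k
    have h2 := hq2 k
    have h := hst k
    nlinarith [hq2 k, hst k, hL]
  -- Part 1: induction  2(n+1) L Δ_n + L² w_{n+1} ≤ L² w_0
  have part1 : ∀ n : ℕ, 2 * ((n:ℝ) + 1) * L * (f (x n) - f xstar)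
      + L ^ 2 * ‖x (n+1) - xstar‖ ^ 2 ≤ L ^ 2 * ‖x 0 - xstar‖ ^ 2 := by
    intro n
    induction n with
    | zero =>
      have h5 := hq5 0
      have hw := hwrec 0
      push_cast
      nlinarith [h5, hw]
    | succ n ih =>
      have h5 := hq5 (n+1)
      have hw := hwrec (n+1)
      have hprod : 0 ≤ 2 * ((n:ℝ) + 1) * L * (f (x n) - f (x (n+1))) :=
        mul_nonneg (by positivity) (by linarith [hmono n])
      push_cast
      push_cast at ih
      nlinarith [h5, hw, hprod, ih]
  -- Part 2: potential induction  Ψ n ≤ L² w 0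
  have part2 : ∀ n : ℕ, 2 * (n:ℝ) * L * (f (x n) - f xstar) + (n:ℝ) * ((n:ℝ) + 1) * ‖f' (x n)‖ ^ 2
      + L ^ 2 * ‖x n - xstar‖ ^ 2 ≤ L ^ 2 * ‖x 0 - xstar‖ ^ 2 := by
    intro n
    induction n with
    | zero => simp
    | succ n ih =>
      have hstepk := step2 (L := L) (n:ℝ) (f (x n)) (f (x (n+1))) (f xstar)
        (‖f' (x n)‖ ^ 2) (‖f' (x (n+1))‖ ^ 2) (⟪f' (x n), f' (x (n+1))⟫)
        (⟪f' (x n), x n - xstar⟫) (‖x n - xstar‖ ^ 2) (‖x (n+1) - xstar‖ ^ 2)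
        (Nat.cast_nonneg n) (hq1 n) (hq2 n) (hq5 n) (hst n) (hwrec n)
      push_cast
      linarith [hstepk, ih]
  -- conclusion 1
  obtain ⟨m, rfl⟩ : ∃ m, N = m + 1 := ⟨N - 1, (Nat.succ_pred_eq_of_pos hN).symm⟩
  set N' : ℕ := m + 1 with hN'
  have hNpos : (0:ℝ) < (N':ℝ) := by positivity
  have hDelta : 0 ≤ f (x N') - f xstar := sub_nonneg.2 (hmin _)
  have hwn : 0 ≤ ‖x (N'+1) - xstar‖ ^ 2 := by positivity
  constructor
  · have h := part1 N'
    have h2 : 2 * ((N':ℝ) + 1) * L * (f (x N') - f xstar) ≤ L ^ 2 * ‖x 0 - xstar‖ ^ 2 := by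
      nlinarith [h, hwn]
    rw [le_div_iff₀ (by positivity : (0:ℝ) < 2 * ((N':ℕ):ℝ) + 1)]
    have hprod : 0 ≤ L * (f (x N') - f xstar) := mul_nonneg hL.le hDelta
    have h3 : L * ((2 * ((N':ℝ)) + 1) * (f (x N') - f xstar)) ≤ L * (L * ‖x 0 - xstar‖ ^ 2) := by
      nlinarith [h2, hprod]
    have h4 := le_of_mul_le_mul_left h3 hL
    linarith
  · -- final step of potential
    have hfin := stepFinal (L := L) (m:ℝ) (f (x m)) (f (x (m+1))) (f xstar)
      (‖f' (x m)‖ ^ 2) (‖f' (x (m+1))‖ ^ 2) (⟪f' (x m), f' (x (m+1))⟫)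
      (⟪f' (x m), x m - xstar⟫) (‖x m - xstar‖ ^ 2) (‖x (m+1) - xstar‖ ^ 2)
      (Nat.cast_nonneg m) (hq1 m) (hq2 m) (hq5 m) (hq4 (m+1)) (hst m) (hwrec m)
    have hP := part2 m
    have hkey : ((m:ℝ) + 1) * ((m:ℝ) + 3) * ‖f' (x (m+1))‖ ^ 2 ≤ L ^ 2 * ‖x 0 - xstar‖ ^ 2 := by
      have hw1 : 0 ≤ L ^ 2 * ‖x (m+1) - xstar‖ ^ 2 := by positivity
      linarith [hfin, hP, hw1]
    rw [le_div_iff₀ (by positivity : (0:ℝ) < ((N':ℕ):ℝ) * (((N':ℕ):ℝ) + 2))]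
    have : ((N':ℕ):ℝ) = (m:ℝ) + 1 := by push_cast [hN']; ring
    rw [this]
    nlinarith [hkey]
end

section
/- For SGD with constant step-size δ_k = 1/L on an L-smooth convex function with unbiased oracle of variance ≤ σ², the iterates satisfy N · E[f(x_N) - f(x⋆)] + (L/2) E‖x_N - x⋆‖² ≤ (L/2)‖x_0 - x⋆‖² + (N(N+3)/4)(σ²/L). -/
open Finset RealInnerProductSpace
set_option maxHeartbeats 1600000

lemma sgd_line_hasDerivAt {d : ℕ} {f : EuclideanSpace ℝ (Fin d) → ℝ}
    {f' : EuclideanSpace ℝ (Fin d) → EuclideanSpace ℝ (Fin d)}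
    (hgrad : ∀ x, HasGradientAt f (f' x) x) (x dv : EuclideanSpace ℝ (Fin d)) (t : ℝ) :
    HasDerivAt (fun t : ℝ => f (x + t • dv)) ⟪f' (x + t • dv), dv⟫ t := by
  have h1 : HasDerivAt (fun t : ℝ => x + t • dv) dv t := by
    simpa using ((hasDerivAt_id t).smul_const dv).const_add x
  have h2 := (hgrad (x + t • dv)).hasFDerivAt.comp_hasDerivAt t h1
  simpa [InnerProductSpace.toDual_apply_apply, Function.comp_def] using h2

lemma sgd_descent {d : ℕ} {L : ℝ} (hL : 0 < L)
    {f : EuclideanSpace ℝ (Fin d) → ℝ}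
    {f' : EuclideanSpace ℝ (Fin d) → EuclideanSpace ℝ (Fin d)}
    (hgrad : ∀ x, HasGradientAt f (f' x) x)
    (hsmooth : ∀ x y, ‖f' x - f' y‖ ≤ L * ‖x - y‖)
    (x y : EuclideanSpace ℝ (Fin d)) :
    f y ≤ f x + ⟪f' x, y - x⟫ + L / 2 * ‖y - x‖ ^ 2 := by
  set dv := y - x with hdv
  have hcontf' : Continuous f' := by
    have : LipschitzWith (Real.toNNReal L) f' := by
      apply LipschitzWith.of_dist_le_mul
      intro a b
      simpa [dist_eq_norm, Real.coe_toNNReal', max_eq_left hL.le] using hsmooth a b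
    exact this.continuous
  have hcontψ : Continuous fun t : ℝ => ⟪f' (x + t • dv), dv⟫ := by
    exact Continuous.inner (hcontf'.comp (by continuity)) continuous_const
  have hFTC : ∫ t in (0:ℝ)..1, ⟪f' (x + t • dv), dv⟫ = f (x + (1:ℝ) • dv) - f (x + (0:ℝ) • dv) :=
    intervalIntegral.integral_eq_sub_of_hasDerivAt (fun t _ => sgd_line_hasDerivAt hgrad x dv t)
      (hcontψ.intervalIntegrable 0 1)
  have hbound : ∀ t ∈ Set.Icc (0:ℝ) 1, ⟪f' (x + t • dv), dv⟫ ≤ ⟪f' x, dv⟫ + t * (L * ‖dv‖ ^ 2) := by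
    intro t ht
    have h1 : ⟪f' (x + t • dv) - f' x, dv⟫ ≤ ‖f' (x + t • dv) - f' x‖ * ‖dv‖ :=
      real_inner_le_norm _ _
    have h2 : ‖f' (x + t • dv) - f' x‖ ≤ L * (t * ‖dv‖) := by
      have := hsmooth (x + t • dv) x
      simpa [norm_smul, abs_of_nonneg ht.1] using this
    have h3 : ‖f' (x + t • dv) - f' x‖ * ‖dv‖ ≤ L * (t * ‖dv‖) * ‖dv‖ :=
      mul_le_mul_of_nonneg_right h2 (norm_nonneg _)
    have h4 : ⟪f' (x + t • dv) - f' x, dv⟫ = ⟪f' (x + t • dv), dv⟫ - ⟪f' x, dv⟫ :=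
      inner_sub_left _ _ _
    nlinarith [sq_nonneg ‖dv‖]
  have hint : ∫ t in (0:ℝ)..1, (⟪f' x, dv⟫ + t * (L * ‖dv‖ ^ 2)) =
      ⟪f' x, dv⟫ + L / 2 * ‖dv‖ ^ 2 := by
    rw [intervalIntegral.integral_add (intervalIntegrable_const)
      ((intervalIntegral.intervalIntegrable_id).mul_const _)]
    simp [integral_id]
    ring
  have hmono : ∫ t in (0:ℝ)..1, ⟪f' (x + t • dv), dv⟫ ≤
      ∫ t in (0:ℝ)..1, (⟪f' x, dv⟫ + t * (L * ‖dv‖ ^ 2)) := by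
    apply intervalIntegral.integral_mono_on (by norm_num) (hcontψ.intervalIntegrable 0 1)
      ((intervalIntegrable_const).add ((intervalIntegral.intervalIntegrable_id).mul_const _))
    exact hbound
  have h5 : x + (1:ℝ) • dv = y := by simp [hdv]
  have h6 : x + (0:ℝ) • dv = x := by simp
  rw [h5, h6] at hFTC
  linarith [hFTC ▸ hmono, hint ▸ hmono]

lemma sgd_convex_lb {d : ℕ} {f : EuclideanSpace ℝ (Fin d) → ℝ}
    {f' : EuclideanSpace ℝ (Fin d) → EuclideanSpace ℝ (Fin d)}
    (hgrad : ∀ x, HasGradientAt f (f' x) x)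
    (hconv : ConvexOn ℝ Set.univ f)
    (x z : EuclideanSpace ℝ (Fin d)) :
    f x + ⟪f' x, z - x⟫ ≤ f z := by
  set dv := z - x with hdv
  have hD : HasDerivAt (fun t : ℝ => f (x + t • dv)) ⟪f' x, dv⟫ 0 := by
    have := sgd_line_hasDerivAt hgrad x dv 0
    simpa using this
  have hslope := hasDerivAt_iff_tendsto_slope.mp hD
  have h2 : Filter.Tendsto (slope (fun t : ℝ => f (x + t • dv)) 0) (nhdsWithin 0 (Set.Ioi 0))
      (nhds ⟪f' x, dv⟫) :=
    hslope.mono_left (nhdsWithin_mono _ (fun t ht => ne_of_gt ht))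
  have hev : ∀ᶠ t in nhdsWithin (0:ℝ) (Set.Ioi 0),
      slope (fun t : ℝ => f (x + t • dv)) 0 t ≤ f z - f x := by
    filter_upwards [Ioo_mem_nhdsGT_of_mem (by norm_num : (0:ℝ) ∈ Set.Ico (0:ℝ) 1)] with t ht
    have hxt : x + t • dv = (1 - t) • x + t • z := by
      simp only [hdv]; module
    have hcomb : f ((1 - t) • x + t • z) ≤ (1 - t) * f x + t * f z :=
      hconv.2 (Set.mem_univ x) (Set.mem_univ z) (by linarith [ht.2]) ht.1.le (by ring)
    rw [slope_def_field]
    simp only [hxt]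
    rw [div_le_iff₀ (by linarith [ht.1] : (0:ℝ) < t - 0)]
    have : x + (0:ℝ) • dv = x := by simp
    simp only [zero_smul, add_zero] at *
    nlinarith [hcomb]
  have := le_of_tendsto h2 hev
  linarith

lemma sgd_key_swap {n N : ℕ} (k : Fin N) (F : (Fin N → Fin n) → Fin n → ℝ)
    (hF : ∀ ω j, F (Function.update ω k j) = F ω) :
    ∑ ω : Fin N → Fin n, ∑ j : Fin n, F ω j = (n : ℝ) * ∑ ω : Fin N → Fin n, F ω (ω k) := by
  have hbij : Function.Bijective
      (fun p : (Fin N → Fin n) × Fin n => (Function.update p.1 k p.2, p.1 k)) := by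
    apply Function.Involutive.bijective
    intro p
    simp [Function.update_idem, Function.update_eq_self]
  have h1 : ∑ p : (Fin N → Fin n) × Fin n, F (Function.update p.1 k p.2) (p.1 k)
      = ∑ q : (Fin N → Fin n) × Fin n, F q.1 q.2 :=
    Function.Bijective.sum_comp hbij (fun q => F q.1 q.2)
  have h2 : ∑ p : (Fin N → Fin n) × Fin n, F (Function.update p.1 k p.2) (p.1 k)
      = ∑ p : (Fin N → Fin n) × Fin n, F p.1 (p.1 k) := by
    apply Finset.sum_congr rfl
    intro p _
    rw [hF]
  calc ∑ ω : Fin N → Fin n, ∑ j : Fin n, F ω j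
      = ∑ q : (Fin N → Fin n) × Fin n, F q.1 q.2 := by
        rw [Fintype.sum_prod_type]
    _ = ∑ p : (Fin N → Fin n) × Fin n, F p.1 (p.1 k) := by rw [← h1, h2]
    _ = ∑ ω : Fin N → Fin n, ∑ _j : Fin n, F ω (ω k) := by
        rw [Fintype.sum_prod_type]
    _ = (n : ℝ) * ∑ ω : Fin N → Fin n, F ω (ω k) := by
        simp only [Finset.sum_const, card_univ, Fintype.card_fin, nsmul_eq_mul]
        rw [Finset.mul_sum]

lemma sgd_one_step {d n : ℕ} (hn : 0 < n) {L σ : ℝ} (hL : 0 < L)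
    {f : EuclideanSpace ℝ (Fin d) → ℝ}
    {f' : EuclideanSpace ℝ (Fin d) → EuclideanSpace ℝ (Fin d)}
    (hgrad : ∀ x, HasGradientAt f (f' x) x)
    (hconv : ConvexOn ℝ Set.univ f)
    (hsmooth : ∀ x y, ‖f' x - f' y‖ ≤ L * ‖x - y‖)
    (xstar : EuclideanSpace ℝ (Fin d))
    {G : EuclideanSpace ℝ (Fin d) → Fin n → EuclideanSpace ℝ (Fin d)}
    (hunbiased : ∀ y, (n : ℝ)⁻¹ • (∑ i, G y i) = f' y)
    (hvar : ∀ y, (n : ℝ)⁻¹ * (∑ i, ‖G y i - f' y‖ ^ 2) ≤ σ ^ 2)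
    (y : EuclideanSpace ℝ (Fin d)) (k : ℕ) :
    ∑ j : Fin n, (((k:ℝ)+1) * (f (y - (1/L) • G y j) - f xstar)
        + L/2 * ‖y - (1/L) • G y j - xstar‖^2)
      ≤ (n:ℝ) * ((k:ℝ) * (f y - f xstar) + L/2 * ‖y - xstar‖^2 + ((k:ℝ)+2)/2 * (σ^2/L)) := by
  have hnR : (0:ℝ) < n := by exact_mod_cast hn
  set g := f' y with hg
  set v := ∑ j : Fin n, ‖G y j - g‖^2 with hvdef
  have hsumG : ∑ j : Fin n, G y j = (n:ℝ) • g := by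
    rw [hg, ← hunbiased y, smul_smul, mul_inv_cancel₀ (ne_of_gt hnR), one_smul]
  have hv : v ≤ (n:ℝ) * σ^2 := by
    have h := hvar y
    rw [inv_mul_le_iff₀ hnR] at h
    exact h
  have hsum0 : ∑ j : Fin n, (G y j - g) = 0 := by
    rw [Finset.sum_sub_distrib, hsumG, Finset.sum_const, card_univ, Fintype.card_fin]
    rw [Nat.cast_smul_eq_nsmul ℝ]
    simp
  have hcross : ∑ j : Fin n, ⟪G y j - g, g⟫ = 0 := by
    rw [← sum_inner, hsum0, inner_zero_left]
  have hB : ∑ j : Fin n, ‖G y j‖^2 = v + (n:ℝ) * ‖g‖^2 := by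
    have : ∀ j : Fin n, ‖G y j‖^2 = ‖G y j - g‖^2 + 2*⟪G y j - g, g⟫ + ‖g‖^2 := by
      intro j
      have := norm_add_sq_real (G y j - g) g
      rw [sub_add_cancel] at this
      linarith
    rw [Finset.sum_congr rfl (fun j _ => this j), Finset.sum_add_distrib, Finset.sum_add_distrib,
      ← Finset.mul_sum, hcross]
    simp only [Finset.sum_const, card_univ, Fintype.card_fin, nsmul_eq_mul, mul_zero, add_zero]
    rfl
  have hinner_sum : ∑ j : Fin n, ⟪y - xstar, G y j⟫ = (n:ℝ) * ⟪y - xstar, g⟫ := by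
    rw [← inner_sum, hsumG, real_inner_smul_right]
  have hA : ∑ j : Fin n, ‖y - (1/L) • G y j - xstar‖^2
      = (n:ℝ)*‖y - xstar‖^2 - (2*(n:ℝ)/L)*⟪y - xstar, g⟫ + (1/L^2)*(v + (n:ℝ)*‖g‖^2) := by
    have hper : ∀ j : Fin n, ‖y - (1/L) • G y j - xstar‖^2
        = ‖y - xstar‖^2 - (2/L)*⟪y - xstar, G y j⟫ + (1/L^2)*‖G y j‖^2 := by
      intro j
      have h1 : y - (1/L) • G y j - xstar = (y - xstar) - (1/L) • G y j := by abel
      rw [h1, norm_sub_sq_real, real_inner_smul_right, norm_smul]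
      rw [mul_pow, Real.norm_eq_abs, sq_abs]
      ring
    rw [Finset.sum_congr rfl (fun j _ => hper j)]
    rw [Finset.sum_add_distrib, Finset.sum_sub_distrib, ← Finset.mul_sum, ← Finset.mul_sum,
      hinner_sum, hB]
    simp only [Finset.sum_const, card_univ, Fintype.card_fin, nsmul_eq_mul]
    ring
  have hinner_g_sum : ∑ j : Fin n, ⟪g, G y j⟫ = (n:ℝ) * ‖g‖^2 := by
    rw [← inner_sum, hsumG, real_inner_smul_right, real_inner_self_eq_norm_sq]
  have hC : ∑ j : Fin n, f (y - (1/L) • G y j)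
      ≤ (n:ℝ) * f y - ((n:ℝ)/(2*L))*‖g‖^2 + (1/(2*L))*v := by
    have hper : ∀ j : Fin n, f (y - (1/L) • G y j)
        ≤ f y - (1/L)*⟪g, G y j⟫ + (1/(2*L))*‖G y j‖^2 := by
      intro j
      have := sgd_descent hL hgrad hsmooth y (y - (1/L) • G y j)
      have h1 : y - (1/L) • G y j - y = -((1/L) • G y j) := by abel
      rw [h1] at this
      rw [inner_neg_right, real_inner_smul_right, norm_neg, norm_smul,
        mul_pow, Real.norm_eq_abs, sq_abs] at this
      calc f (y - (1/L) • G y j) ≤ f y + -((1/L) * ⟪g, G y j⟫) + L/2 * ((1/L)^2 * ‖G y j‖^2) := this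
        _ = f y - (1/L)*⟪g, G y j⟫ + (1/(2*L))*‖G y j‖^2 := by field_simp; ring
    calc ∑ j : Fin n, f (y - (1/L) • G y j)
        ≤ ∑ j : Fin n, (f y - (1/L)*⟪g, G y j⟫ + (1/(2*L))*‖G y j‖^2) :=
          Finset.sum_le_sum (fun j _ => hper j)
      _ = (n:ℝ) * f y - ((n:ℝ)/(2*L))*‖g‖^2 + (1/(2*L))*v := by
          rw [Finset.sum_add_distrib, Finset.sum_sub_distrib, ← Finset.mul_sum, ← Finset.mul_sum,
            hinner_g_sum, hB]
          simp only [Finset.sum_const, card_univ, Fintype.card_fin, nsmul_eq_mul]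
          field_simp
          ring
  have hD : f y - f xstar ≤ ⟪y - xstar, g⟫ := by
    have := sgd_convex_lb hgrad hconv y xstar
    have h1 : ⟪g, xstar - y⟫ = -⟪y - xstar, g⟫ := by
      rw [real_inner_comm, ← inner_neg_left, neg_sub]
    rw [h1] at this
    linarith
  have hvnn : 0 ≤ v := Finset.sum_nonneg (fun j _ => by positivity)
  have hgnn : (0:ℝ) ≤ ‖g‖^2 := by positivity
  have hknn : (0:ℝ) ≤ (k:ℝ) := Nat.cast_nonneg k
  -- expand LHS
  have hLHS : ∑ j : Fin n, (((k:ℝ)+1) * (f (y - (1/L) • G y j) - f xstar)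
        + L/2 * ‖y - (1/L) • G y j - xstar‖^2)
      = ((k:ℝ)+1) * ((∑ j : Fin n, f (y - (1/L) • G y j)) - (n:ℝ) * f xstar)
        + L/2 * ∑ j : Fin n, ‖y - (1/L) • G y j - xstar‖^2 := by
    rw [Finset.sum_add_distrib, ← Finset.mul_sum, ← Finset.mul_sum, Finset.sum_sub_distrib]
    simp only [Finset.sum_const, card_univ, Fintype.card_fin, nsmul_eq_mul]
  have hCL : 2*L*(∑ j : Fin n, f (y - (1/L) • G y j))
      ≤ 2*L*((n:ℝ)*f y) - (n:ℝ)*‖g‖^2 + v := by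
    have h := mul_le_mul_of_nonneg_left hC (by positivity : (0:ℝ) ≤ 2*L)
    have he : 2*L*((n:ℝ) * f y - (n:ℝ)/(2*L)*‖g‖^2 + 1/(2*L)*v)
        = 2*L*((n:ℝ)*f y) - (n:ℝ)*‖g‖^2 + v := by
      field_simp
    rw [he] at h
    exact h
  have hAL : L^2 * (∑ j : Fin n, ‖y - (1/L) • G y j - xstar‖^2)
      = L^2*((n:ℝ)*‖y - xstar‖^2) - 2*L*(n:ℝ)*⟪y - xstar, g⟫ + v + (n:ℝ)*‖g‖^2 := by
    rw [hA]
    field_simp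
    ring
  rw [hLHS, ← mul_le_mul_iff_right₀ (show (0:ℝ) < 2*L by positivity)]
  have e2 : 2*L*((n:ℝ) * ((k:ℝ) * (f y - f xstar) + L/2 * ‖y - xstar‖^2 + ((k:ℝ)+2)/2 * (σ^2/L)))
      = 2*L*(n:ℝ)*(k:ℝ)*(f y - f xstar) + L^2*((n:ℝ)*‖y - xstar‖^2) + (n:ℝ)*(((k:ℝ)+2)*σ^2) := by
    field_simp
  have e1 : 2*L*(((k:ℝ)+1) * ((∑ j : Fin n, f (y - (1/L) • G y j)) - (n:ℝ) * f xstar)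
        + L/2 * ∑ j : Fin n, ‖y - (1/L) • G y j - xstar‖^2)
      = ((k:ℝ)+1)*(2*L*(∑ j : Fin n, f (y - (1/L) • G y j)))
        - 2*L*((k:ℝ)+1)*((n:ℝ)*f xstar)
        + L^2 * (∑ j : Fin n, ‖y - (1/L) • G y j - xstar‖^2) := by ring
  rw [e1, e2]
  have a1 := mul_le_mul_of_nonneg_left hCL (by positivity : (0:ℝ) ≤ (k:ℝ)+1)
  have a2 := mul_le_mul_of_nonneg_left hD (by positivity : (0:ℝ) ≤ 2*L*(n:ℝ))
  have a3 := mul_le_mul_of_nonneg_left hv (by positivity : (0:ℝ) ≤ (k:ℝ)+2)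
  have a4 : (0:ℝ) ≤ (k:ℝ)*((n:ℝ)*‖g‖^2) := by positivity
  nlinarith [a1, a2, a3, a4, hAL]

lemma sgd_gauss (m : ℕ) : ∑ k ∈ Finset.range m, ((k:ℝ)+2)/2 = (m:ℝ)*((m:ℝ)+3)/4 := by
  induction m with
  | zero => simp
  | succ p ih =>
    rw [Finset.sum_range_succ, ih]
    push_cast
    ring

/-- Telescoped bound for SGD with constant step-size 1/L: the expectation is
over all sequences of indices `ω : Fin N → Fin n`, each drawn uniformly. -/
theorem sgd_unit_step_telescoped {d n N : ℕ} (hn : 0 < n) (L σ : ℝ) (hL : 0 < L)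
    (f : EuclideanSpace ℝ (Fin d) → ℝ)
    (f' : EuclideanSpace ℝ (Fin d) → EuclideanSpace ℝ (Fin d))
    (hgrad : ∀ x, HasGradientAt f (f' x) x)
    (hconv : ConvexOn ℝ Set.univ f)
    (hsmooth : ∀ x y, ‖f' x - f' y‖ ≤ L * ‖x - y‖)
    (xstar : EuclideanSpace ℝ (Fin d)) (hmin : ∀ y, f xstar ≤ f y)
    (G : EuclideanSpace ℝ (Fin d) → Fin n → EuclideanSpace ℝ (Fin d))
    (hunbiased : ∀ y, (n : ℝ)⁻¹ • (∑ i, G y i) = f' y)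
    (hvar : ∀ y, (n : ℝ)⁻¹ * (∑ i, ‖G y i - f' y‖ ^ 2) ≤ σ ^ 2)
    (x0 : EuclideanSpace ℝ (Fin d))
    (x : (Fin N → Fin n) → ℕ → EuclideanSpace ℝ (Fin d))
    (hx0 : ∀ ω, x ω 0 = x0)
    (hstep : ∀ ω (k : Fin N),
      x ω (k.val + 1) = x ω k.val - (1 / L) • G (x ω k.val) (ω k)) :
    (N : ℝ) * (((n : ℝ) ^ N)⁻¹ * ∑ ω : Fin N → Fin n, (f (x ω N) - f xstar))
      + L / 2 * (((n : ℝ) ^ N)⁻¹ * ∑ ω : Fin N → Fin n, ‖x ω N - xstar‖ ^ 2)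
    ≤ L / 2 * ‖x0 - xstar‖ ^ 2 + (N : ℝ) * ((N : ℝ) + 3) / 4 * (σ ^ 2 / L) := by
  have hnR : (0:ℝ) < n := by exact_mod_cast hn
  have hdep : ∀ k : ℕ, k ≤ N → ∀ ω ω' : Fin N → Fin n,
      (∀ i : Fin N, (i:ℕ) < k → ω i = ω' i) → x ω k = x ω' k := by
    intro k
    induction k with
    | zero => intro _ ω ω' _; rw [hx0, hx0]
    | succ k ih =>
      intro hk ω ω' h
      have hkN : k < N := hk
      rw [hstep ω ⟨k, hkN⟩, hstep ω' ⟨k, hkN⟩,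
        ih (le_of_lt hkN) ω ω' (fun i hi => h i (Nat.lt_succ_of_lt hi)),
        h ⟨k, hkN⟩ (Nat.lt_succ_self k)]
  set S : ℕ → ℝ := fun k => ∑ ω : Fin N → Fin n,
    ((k:ℝ) * (f (x ω k) - f xstar) + L/2 * ‖x ω k - xstar‖^2) with hSdef
  have hcard : (Fintype.card (Fin N → Fin n) : ℝ) = (n:ℝ)^N := by
    simp [Fintype.card_fun]
  have hstepS : ∀ k : ℕ, k < N →
      S (k+1) ≤ S k + (n:ℝ)^N * (((k:ℝ)+2)/2 * (σ^2/L)) := by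
    intro k hk
    set kF : Fin N := ⟨k, hk⟩ with hkF
    set F : (Fin N → Fin n) → Fin n → ℝ := fun ω j =>
      ((k:ℝ)+1) * (f (x ω k - (1/L) • G (x ω k) j) - f xstar)
        + L/2 * ‖x ω k - (1/L) • G (x ω k) j - xstar‖^2 with hFdef
    have hxu : ∀ (ω : Fin N → Fin n) (j : Fin n), x (Function.update ω kF j) k = x ω k := by
      intro ω j
      exact hdep k hk.le _ _ (fun i hi =>
        Function.update_of_ne (Fin.ne_of_val_ne (Nat.ne_of_lt hi)) j ω)
    have hF : ∀ ω j, F (Function.update ω kF j) = F ω := by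
      intro ω j
      funext j'
      simp only [hFdef, hxu]
    have hswap := sgd_key_swap kF F hF
    have hFeval : ∀ ω : Fin N → Fin n, F ω (ω kF)
        = ((k:ℝ)+1) * (f (x ω (k+1)) - f xstar) + L/2 * ‖x ω (k+1) - xstar‖^2 := by
      intro ω
      have h1 := hstep ω kF
      simp only [hkF] at h1
      simp only [hFdef, h1]
      rfl
    have hub : ∀ ω : Fin N → Fin n, ∑ j : Fin n, F ω j
        ≤ (n:ℝ) * ((k:ℝ) * (f (x ω k) - f xstar) + L/2 * ‖x ω k - xstar‖^2
            + ((k:ℝ)+2)/2 * (σ^2/L)) := by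
      intro ω
      exact sgd_one_step hn hL hgrad hconv hsmooth xstar hunbiased hvar (x ω k) k
    have hsum1 : (n:ℝ) * S (k+1) = ∑ ω : Fin N → Fin n, ∑ j : Fin n, F ω j := by
      rw [hswap]
      congr 1
      apply Finset.sum_congr rfl
      intro ω _
      rw [hFeval ω]
      push_cast
      ring
    have hsum2 : ∑ ω : Fin N → Fin n, ∑ j : Fin n, F ω j
        ≤ (n:ℝ) * (S k + (n:ℝ)^N * (((k:ℝ)+2)/2 * (σ^2/L))) := by
      calc ∑ ω : Fin N → Fin n, ∑ j : Fin n, F ω j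
          ≤ ∑ ω : Fin N → Fin n, (n:ℝ) * ((k:ℝ) * (f (x ω k) - f xstar)
              + L/2 * ‖x ω k - xstar‖^2 + ((k:ℝ)+2)/2 * (σ^2/L)) :=
            Finset.sum_le_sum (fun ω _ => hub ω)
        _ = (n:ℝ) * (S k + (n:ℝ)^N * (((k:ℝ)+2)/2 * (σ^2/L))) := by
            rw [← Finset.mul_sum]
            congr 1
            rw [hSdef]
            simp only []
            rw [Finset.sum_add_distrib, Finset.sum_const, card_univ, nsmul_eq_mul, hcard]
      -- done
    have := hsum1 ▸ hsum2
    exact le_of_mul_le_mul_left this hnR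
  have hS0 : S 0 = (n:ℝ)^N * (L/2 * ‖x0 - xstar‖^2) := by
    rw [hSdef]
    simp only [Nat.cast_zero, zero_mul, zero_add, hx0]
    rw [Finset.sum_const, card_univ, nsmul_eq_mul, hcard]
  have htel : ∀ m : ℕ, m ≤ N →
      S m ≤ S 0 + (n:ℝ)^N * ((∑ k ∈ Finset.range m, ((k:ℝ)+2)/2) * (σ^2/L)) := by
    intro m
    induction m with
    | zero => intro _; simp
    | succ m ih =>
      intro hm
      have h1 := ih (le_of_lt hm)
      have h2 := hstepS m hm
      rw [Finset.sum_range_succ]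
      nlinarith [h1, h2]
  have hsum : ∑ k ∈ Finset.range N, ((k:ℝ)+2)/2 = (N:ℝ) * ((N:ℝ)+3) / 4 := by
    rw [sgd_gauss]
  have hSN := htel N le_rfl
  rw [hsum, hS0] at hSN
  have hgoal : (N : ℝ) * (((n : ℝ) ^ N)⁻¹ * ∑ ω : Fin N → Fin n, (f (x ω N) - f xstar))
      + L / 2 * (((n : ℝ) ^ N)⁻¹ * ∑ ω : Fin N → Fin n, ‖x ω N - xstar‖ ^ 2)
      = ((n:ℝ)^N)⁻¹ * S N := by
    rw [hSdef]
    simp only []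
    rw [Finset.sum_add_distrib, ← Finset.mul_sum, ← Finset.mul_sum]
    ring
  rw [hgoal, inv_mul_le_iff₀ (by positivity : (0:ℝ) < (n:ℝ)^N)]
  nlinarith [hSN, pow_pos hnR N]
end

section
/- Consider stochastic gradient descent with Polyak–Ruppert-type averaging: x_{k+1} = x_k - δ_k G(x_k; i_k) and z_{k+1} = (1/(d_k+1)) x_{k+1} + (d_k/(d_k+1)) z_k, with d_{k+1} = d_k + 1. If f is L-smooth convex, the oracle is unbiased with E_i‖G(x_k;i) - f'(x_k)‖² ≤ σ², and 0 ≤ δ_k ≤ (1+√5)/(2L), then δ_k d_{k+1} L · E_{i_k}[f(z_{k+1}) - f⋆] + (L/2) E_{i_k}‖x_{k+1} - x⋆‖² ≤ δ_k d_k L (f(z_k) - f⋆) + (L/2)‖x_k - x⋆‖² + e_k σ², where e_k = (δ_k²/2) · L(1 + d_k + Lδ_k)/(1 + d_k). -/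
open Finset

open scoped RealInnerProductSpace

section Aux
variable {d : ℕ} {L : ℝ}
local notation "E" => EuclideanSpace ℝ (Fin d)

/-- derivative of f along a line, from the gradient -/
lemma line_hasDerivAt (f : E → ℝ) (f' : E → E) (hgrad : ∀ x, HasGradientAt f (f' x) x)
    (x v : E) (t : ℝ) :
    HasDerivAt (fun s : ℝ => f (x + s • v)) ⟪f' (x + t • v), v⟫ t := by
  have hc : HasDerivAt (fun s : ℝ => x + s • v) v t := by
    simpa using ((hasDerivAt_id t).smul_const v).const_add x
  have hf : HasFDerivAt f (InnerProductSpace.toDual ℝ _ (f' (x + t • v))) (x + t • v) :=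
    (hgrad (x + t • v))
  have := hf.comp_hasDerivAt t hc
  simpa [InnerProductSpace.toDual_apply_apply, Function.comp_def] using this

/-- convexity lower bound -/
lemma conv_lb (f : E → ℝ) (f' : E → E) (hgrad : ∀ x, HasGradientAt f (f' x) x)
    (hconv : ConvexOn ℝ Set.univ f) (x y : E) :
    f x + ⟪f' x, y - x⟫ ≤ f y := by
  set φ : ℝ → ℝ := fun s => f (x + s • (y - x)) with hφ
  have hconvφ : ConvexOn ℝ Set.univ φ := by
    have := hconv.comp_affineMap (AffineMap.lineMap x y : ℝ →ᵃ[ℝ] E)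
    have he : ∀ s : ℝ, (1 - s) • x + s • y = x + s • (y - x) := by intro s; module
    simpa [hφ, Function.comp_def, AffineMap.lineMap_apply_module, he] using this
  have hder : HasDerivAt φ ⟪f' x, y - x⟫ 0 := by
    simpa using line_hasDerivAt f f' hgrad x (y - x) 0
  have h1 := hconvφ.deriv_le_slope (Set.mem_univ (0:ℝ)) (Set.mem_univ (1:ℝ))
    one_pos hder.differentiableAt
  rw [hder.deriv] at h1
  have hs : slope φ 0 1 = f y - f x := by
    simp [slope_def_field, hφ]
  rw [hs] at h1
  linarith


/-- smoothness (descent lemma) upper bound -/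
lemma smooth_ub (f : E → ℝ) (f' : E → E) (hL : 0 < L)
    (hgrad : ∀ x, HasGradientAt f (f' x) x)
    (hsmooth : ∀ x y, ‖f' x - f' y‖ ≤ L * ‖x - y‖) (x y : E) :
    f y ≤ f x + ⟪f' x, y - x⟫ + L / 2 * ‖y - x‖ ^ 2 := by
  set v := y - x with hv
  set C : ℝ := ⟪f' x, v⟫ with hC
  set K : ℝ := ‖v‖ ^ 2 with hK
  set χ : ℝ → ℝ := fun t => f x + t * C + L * K / 2 * t ^ 2 - f (x + t • v) with hχ
  have hder : ∀ t : ℝ, HasDerivAt χ (C + L * K / 2 * (2 * t) - ⟪f' (x + t • v), v⟫) t := by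
    intro t
    have h1 : HasDerivAt (fun t : ℝ => f x + t * C) C t := by
      simpa using ((hasDerivAt_id t).mul_const C).const_add (f x)
    have h2 : HasDerivAt (fun t : ℝ => L * K / 2 * t ^ 2) (L * K / 2 * (2 * t)) t := by
      simpa [mul_comm] using (hasDerivAt_pow 2 t).const_mul (L * K / 2)
    exact ((h1.add h2).sub (line_hasDerivAt f f' hgrad x v t))
  have hmono : MonotoneOn χ (Set.Icc 0 1) := by
    apply monotoneOn_of_deriv_nonneg (convex_Icc 0 1)
    · exact fun t _ => ((hder t).differentiableAt).continuousAt.continuousWithinAt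
    · exact fun t _ => ((hder t).differentiableAt).differentiableWithinAt
    · intro t ht
      rw [interior_Icc, Set.mem_Ioo] at ht
      rw [(hder t).deriv]
      have hb : ⟪f' (x + t • v) - f' x, v⟫ ≤ L * t * K := by
        calc ⟪f' (x + t • v) - f' x, v⟫ ≤ ‖f' (x + t • v) - f' x‖ * ‖v‖ :=
              real_inner_le_norm _ _
          _ ≤ (L * ‖(x + t • v) - x‖) * ‖v‖ :=
              mul_le_mul_of_nonneg_right (hsmooth _ _) (norm_nonneg _)
          _ = L * t * K := by
              rw [add_sub_cancel_left, norm_smul, Real.norm_eq_abs, abs_of_pos ht.1, hK]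
              ring
      have hsplit : ⟪f' (x + t • v) - f' x, v⟫ = ⟪f' (x + t • v), v⟫ - C := by
        rw [inner_sub_left, hC]
      linarith
  have h01 := hmono (Set.mem_Icc.mpr ⟨le_refl 0, zero_le_one⟩)
    (Set.mem_Icc.mpr ⟨zero_le_one, le_refl 1⟩) zero_le_one
  have hχ0 : χ 0 = 0 := by simp [hχ]
  have hxy : x + v = y := by rw [hv]; abel
  have hχ1 : χ 1 = f x + C + L * K / 2 - f y := by simp [hχ, hxy]
  rw [hχ0, hχ1] at h01
  have : L * K / 2 = L / 2 * ‖y - x‖ ^ 2 := by rw [hK, hv]; ring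
  linarith [this ▸ h01]

/-- interpolation inequality -/
lemma interp_lb (f : E → ℝ) (f' : E → E) (hL : 0 < L)
    (hgrad : ∀ x, HasGradientAt f (f' x) x) (hconv : ConvexOn ℝ Set.univ f)
    (hsmooth : ∀ x y, ‖f' x - f' y‖ ≤ L * ‖x - y‖) (x y : E) :
    f x + ⟪f' x, y - x⟫ + 1 / (2 * L) * ‖f' x - f' y‖ ^ 2 ≤ f y := by
  set w : E := f' y - f' x with hw
  set z : E := y - (1 / L) • w with hz
  have h1 : f x + ⟪f' x, z - x⟫ ≤ f z := conv_lb f f' hgrad hconv x z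
  have h2 : f z ≤ f y + ⟪f' y, z - y⟫ + L / 2 * ‖z - y‖ ^ 2 :=
    smooth_ub f f' hL hgrad hsmooth y z
  have hzy : z - y = -((1 / L) • w) := by rw [hz]; abel
  have hzx : z - x = (y - x) - (1 / L) • w := by rw [hz]; abel
  have e1 : ⟪f' x, z - x⟫ = ⟪f' x, y - x⟫ - (1 / L) * ⟪f' x, w⟫ := by
    rw [hzx, inner_sub_right, real_inner_smul_right]
  have e2 : ⟪f' y, z - y⟫ = -((1 / L) * ⟪f' y, w⟫) := by
    rw [hzy, inner_neg_right, real_inner_smul_right]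
  have e3 : ‖z - y‖ ^ 2 = (1 / L) ^ 2 * ‖w‖ ^ 2 := by
    rw [hzy, norm_neg, norm_smul, Real.norm_eq_abs, mul_pow, sq_abs]
  have e4 : ⟪f' y, w⟫ - ⟪f' x, w⟫ = ‖w‖ ^ 2 := by
    rw [← inner_sub_left, ← hw, real_inner_self_eq_norm_sq]
  have e5 : ‖f' x - f' y‖ ^ 2 = ‖w‖ ^ 2 := by rw [hw, norm_sub_rev]
  rw [e1] at h1
  rw [e2, e3] at h2
  rw [e5]
  have hL' : L ≠ 0 := ne_of_gt hL
  have h4 : ⟪f' x, w⟫ = ⟪f' y, w⟫ - ‖w‖ ^ 2 := by linarith [e4]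
  have key : 1 / (2 * L) * ‖w‖ ^ 2 + (1 / L) * ⟪f' x, w⟫ - (1 / L) * ⟪f' y, w⟫
      + L / 2 * ((1 / L) ^ 2 * ‖w‖ ^ 2) = 0 := by
    rw [h4]; field_simp; ring
  linarith

end Aux

set_option maxHeartbeats 1000000 in
/-- One-step potential inequality for SGD with Polyak–Ruppert-type averaging. -/
theorem sgd_averaging_potential_decrease {d n : ℕ} (hn : 0 < n) (L σ : ℝ) (hL : 0 < L)
    (f : EuclideanSpace ℝ (Fin d) → ℝ)
    (f' : EuclideanSpace ℝ (Fin d) → EuclideanSpace ℝ (Fin d))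
    (hgrad : ∀ x, HasGradientAt f (f' x) x)
    (hconv : ConvexOn ℝ Set.univ f)
    (hsmooth : ∀ x y, ‖f' x - f' y‖ ≤ L * ‖x - y‖)
    (xstar : EuclideanSpace ℝ (Fin d)) (hmin : ∀ y, f xstar ≤ f y)
    (δ dk : ℝ) (hδ0 : 0 ≤ δ) (hδ1 : δ ≤ (1 + Real.sqrt 5) / (2 * L)) (hdk : 0 ≤ dk)
    (xk zk : EuclideanSpace ℝ (Fin d)) (G : Fin n → EuclideanSpace ℝ (Fin d))
    (hunbiased : (n : ℝ)⁻¹ • (∑ i, G i) = f' xk)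
    (hvar : (n : ℝ)⁻¹ * (∑ i, ‖G i - f' xk‖ ^ 2) ≤ σ ^ 2)
    (x1 z1 : Fin n → EuclideanSpace ℝ (Fin d))
    (hx1 : ∀ i, x1 i = xk - δ • G i)
    (hz1 : ∀ i, z1 i = (1 / (dk + 1)) • x1 i + (dk / (dk + 1)) • zk) :
    δ * (dk + 1) * L * ((n : ℝ)⁻¹ * ∑ i, (f (z1 i) - f xstar))
        + L / 2 * ((n : ℝ)⁻¹ * ∑ i, ‖x1 i - xstar‖ ^ 2)
      ≤ δ * dk * L * (f zk - f xstar) + L / 2 * ‖xk - xstar‖ ^ 2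
        + (δ ^ 2 / 2 * (L * (1 + dk + L * δ) / (1 + dk))) * σ ^ 2 := by
  have hN : (0:ℝ) < (n:ℝ) := by exact_mod_cast hn
  have hNne : (n:ℝ) ≠ 0 := ne_of_gt hN
  have hc0 : (dk + 1) ≠ 0 := by positivity
  -- gradient vanishes at the minimizer
  have hstar : f' xstar = 0 := by
    have h := smooth_ub f f' hL hgrad hsmooth xstar (xstar - (1/L) • f' xstar)
    have hmin' := hmin (xstar - (1/L) • f' xstar)
    have e1 : (xstar - (1/L) • f' xstar) - xstar = -((1/L) • f' xstar) := by abel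
    rw [e1, inner_neg_right, real_inner_smul_right, real_inner_self_eq_norm_sq, norm_neg,
      norm_smul, Real.norm_eq_abs, abs_of_pos (by positivity : (0:ℝ) < 1/L)] at h
    have h2 : L/2*((1/L)*‖f' xstar‖)^2 = 1/(2*L)*‖f' xstar‖^2 := by field_simp
    have hpos : (0:ℝ) < 1/(2*L) := by positivity
    have h4 : -(1/L*‖f' xstar‖^2) + 1/(2*L)*‖f' xstar‖^2 = -(1/(2*L)*‖f' xstar‖^2) := by
      field_simp; ring
    have hfin : (0:ℝ) ≤ -(1/(2*L)*‖f' xstar‖^2) := by linarith [h, hmin', h2, h4]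
    have hn2 : ‖f' xstar‖^2 ≤ 0 := by nlinarith [hfin, hpos]
    have hsq : ‖f' xstar‖ ^ 2 = 0 := le_antisymm hn2 (sq_nonneg _)
    exact norm_eq_zero.mp (sq_eq_zero_iff.mp hsq)
  -- golden ratio condition
  have hgold : L^2*δ^2 ≤ L*δ + 1 := by
    have h5 : Real.sqrt 5 ^ 2 = 5 := Real.sq_sqrt (by norm_num)
    have h5n : (0:ℝ) ≤ Real.sqrt 5 := Real.sqrt_nonneg 5
    have hLδ : L*δ ≤ (1 + Real.sqrt 5)/2 := by
      have h := mul_le_mul_of_nonneg_left hδ1 (le_of_lt hL)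
      have he : L*((1+Real.sqrt 5)/(2*L)) = (1+Real.sqrt 5)/2 := by field_simp
      linarith [he ▸ h]
    have hs1 : (1:ℝ) ≤ Real.sqrt 5 := by nlinarith [h5, h5n]
    nlinarith [hLδ, h5, h5n, mul_nonneg (le_of_lt hL) hδ0, hs1]
  have hsumG : ∑ i, G i = (n:ℝ) • (f' xk) := by
    rw [← hunbiased, smul_smul, mul_inv_cancel₀ hNne, one_smul]
  set m : EuclideanSpace ℝ (Fin d) :=
    (1 / (dk + 1)) • (xk - δ • f' xk) + (dk / (dk + 1)) • zk with hm
  -- z1 i - m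
  have hzm : ∀ i, z1 i - m = (δ/(dk+1)) • (f' xk - G i) := by
    intro i
    rw [hz1 i, hx1 i, hm,
      show (xk - δ • G i : EuclideanSpace ℝ (Fin d))
          = (xk - δ • f' xk) + δ • (f' xk - G i) from by rw [smul_sub]; abel,
      smul_add, smul_smul, show (1/(dk+1))*δ = δ/(dk+1) from by ring]
    abel
  -- Step A : smoothness at m, per i
  have hA : ∀ i, f (z1 i) ≤ f m + ⟪f' m, z1 i - m⟫ + (L/2 * (δ/(dk+1))^2) * ‖G i - f' xk‖^2 := by
    intro i
    have h := smooth_ub f f' hL hgrad hsmooth m (z1 i)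
    have e : ‖z1 i - m‖^2 = (δ/(dk+1))^2 * ‖G i - f' xk‖^2 := by
      rw [hzm i, norm_smul, Real.norm_eq_abs, mul_pow, sq_abs, norm_sub_rev]
    rw [e] at h
    linarith [h]
  have hsumzm : ∑ i, (z1 i - m) = 0 := by
    calc ∑ i, (z1 i - m) = ∑ i, (δ/(dk+1)) • (f' xk - G i) :=
          Finset.sum_congr rfl (fun i _ => hzm i)
      _ = (δ/(dk+1)) • (∑ i : Fin n, (f' xk - G i)) := (Finset.smul_sum).symm
      _ = (δ/(dk+1)) • ((n:ℝ) • f' xk - ∑ i, G i) := by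
          rw [Finset.sum_sub_distrib, Finset.sum_const, Finset.card_univ, Fintype.card_fin,
            ← Nat.cast_smul_eq_nsmul ℝ]
      _ = 0 := by rw [hsumG, sub_self, smul_zero]
  have hinner0 : ∑ i, ⟪f' m, z1 i - m⟫ = 0 := by
    rw [← inner_sum, hsumzm, inner_zero_right]
  have hAsum : ∑ i, f (z1 i) ≤ (n:ℝ) * f m + L/2 * (δ/(dk+1))^2 * ∑ i, ‖G i - f' xk‖^2 := by
    calc ∑ i, f (z1 i)
        ≤ ∑ i, (f m + ⟪f' m, z1 i - m⟫ + (L/2 * (δ/(dk+1))^2) * ‖G i - f' xk‖^2) :=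
          Finset.sum_le_sum (fun i _ => hA i)
      _ = (n:ℝ) * f m + L/2 * (δ/(dk+1))^2 * ∑ i, ‖G i - f' xk‖^2 := by
          rw [Finset.sum_add_distrib, Finset.sum_add_distrib, hinner0, Finset.sum_const,
            Finset.card_univ, Fintype.card_fin, nsmul_eq_mul, ← Finset.mul_sum]
          ring
  -- Step X : exact expansion of ∑ ‖x1 i - xstar‖²
  have hx1s : ∀ i, x1 i - xstar = (xk - xstar - δ • f' xk) - δ • (G i - f' xk) := by
    intro i; rw [hx1 i, smul_sub]; abel
  have hXi : ∀ i, ‖x1 i - xstar‖^2 = ‖xk - xstar - δ • f' xk‖^2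
      - 2*(δ*⟪xk - xstar - δ • f' xk, G i - f' xk⟫) + δ^2*‖G i - f' xk‖^2 := by
    intro i
    rw [hx1s i, norm_sub_sq_real, real_inner_smul_right, norm_smul, Real.norm_eq_abs,
      mul_pow, sq_abs]
  have hsumeps : ∑ i, (G i - f' xk) = 0 := by
    rw [Finset.sum_sub_distrib, Finset.sum_const, Finset.card_univ, Fintype.card_fin,
      ← Nat.cast_smul_eq_nsmul ℝ, hsumG, sub_self]
  have hinner1 : ∑ i, ⟪xk - xstar - δ • f' xk, G i - f' xk⟫ = 0 := by
    rw [← inner_sum, hsumeps, inner_zero_right]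
  have hXsum : ∑ i, ‖x1 i - xstar‖^2
      = (n:ℝ) * ‖xk - xstar - δ • f' xk‖^2 + δ^2 * ∑ i, ‖G i - f' xk‖^2 := by
    calc ∑ i, ‖x1 i - xstar‖^2
        = ∑ i, (‖xk - xstar - δ • f' xk‖^2
            - 2*(δ*⟪xk - xstar - δ • f' xk, G i - f' xk⟫) + δ^2*‖G i - f' xk‖^2) :=
          Finset.sum_congr rfl (fun i _ => hXi i)
      _ = (n:ℝ) * ‖xk - xstar - δ • f' xk‖^2 + δ^2 * ∑ i, ‖G i - f' xk‖^2 := by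
          rw [Finset.sum_add_distrib, Finset.sum_sub_distrib, Finset.sum_const,
            Finset.card_univ, Fintype.card_fin, nsmul_eq_mul, ← Finset.mul_sum,
            ← Finset.mul_sum, hinner1]
          rw [← Finset.mul_sum]
          ring
  -- deterministic potential inequality at m
  have hcm : (dk+1) • m = (xk - δ • f' xk) + dk • zk := by
    rw [hm, smul_add, smul_smul, smul_smul,
      show (dk+1)*(1/(dk+1)) = 1 from by field_simp,
      show (dk+1)*(dk/(dk+1)) = dk from by field_simp, one_smul]
  have hvec : dk • (zk - m) + (xk - m) = δ • f' xk := by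
    have h' : dk • (zk - m) + (xk - m) = (dk • zk + xk) - (dk+1) • m := by
      rw [add_smul, one_smul, smul_sub]; abel
    rw [h', hcm]; abel
  have hR : dk * ⟪f' m, zk - m⟫ + ⟪f' m, xk - m⟫ = δ * ⟪f' m, f' xk⟫ := by
    rw [← real_inner_smul_right, ← real_inner_smul_right, ← inner_add_right, hvec]
  have h1 : f m + ⟪f' m, zk - m⟫ ≤ f zk := conv_lb f f' hgrad hconv m zk
  have h2 : f m + ⟪f' m, xk - m⟫ + 1/(2*L)*‖f' m - f' xk‖^2 ≤ f xk :=
    interp_lb f f' hL hgrad hconv hsmooth m xk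
  have h3 : f xk + ⟪f' xk, xstar - xk⟫ + 1/(2*L)*‖f' xk‖^2 ≤ f xstar := by
    have h := interp_lb f f' hL hgrad hconv hsmooth xk xstar
    rw [hstar, sub_zero] at h
    exact h
  have hrg : ‖f' xk‖^2 - ‖f' m - f' xk‖*‖f' xk‖ ≤ ⟪f' m, f' xk⟫ := by
    have ha := (abs_le.mp (abs_real_inner_le_norm (f' m - f' xk) (f' xk))).1
    have hb : ⟪f' m - f' xk, f' xk⟫ = ⟪f' m, f' xk⟫ - ‖f' xk‖^2 := by
      rw [inner_sub_left, real_inner_self_eq_norm_sq]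
    linarith [hb ▸ ha]
  have hkey : δ^2*L/2*‖f' xk‖^2 ≤ δ/2*‖f' xk‖^2 + δ^2*L*⟪f' m, f' xk⟫
      + δ/2*‖f' m - f' xk‖^2 := by
    have p1 : (0:ℝ) ≤ δ*(‖f' m - f' xk‖ - L*δ*‖f' xk‖)^2 := mul_nonneg hδ0 (sq_nonneg _)
    have p2 : δ^2*L*(‖f' xk‖^2 - ‖f' m - f' xk‖*‖f' xk‖) ≤ δ^2*L*⟪f' m, f' xk⟫ :=
      mul_le_mul_of_nonneg_left hrg (by positivity)
    have p3 : (δ/2*‖f' xk‖^2)*(L^2*δ^2) ≤ (δ/2*‖f' xk‖^2)*(L*δ+1) :=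
      mul_le_mul_of_nonneg_left hgold (by positivity)
    nlinarith [p1, p2, p3]
  have hδL : (0:ℝ) ≤ δ*L := by positivity
  have hδdkL : (0:ℝ) ≤ δ*dk*L := by positivity
  have T1 : δ*dk*L*(f m + ⟪f' m, zk - m⟫) ≤ δ*dk*L*(f zk) :=
    mul_le_mul_of_nonneg_left h1 hδdkL
  have T2 : δ*L*(f m + ⟪f' m, xk - m⟫) + δ/2*‖f' m - f' xk‖^2 ≤ δ*L*(f xk) := by
    have h' := mul_le_mul_of_nonneg_left h2 hδL
    have he : δ*L*(f m + ⟪f' m, xk - m⟫ + 1/(2*L)*‖f' m - f' xk‖^2)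
        = δ*L*(f m + ⟪f' m, xk - m⟫) + δ/2*‖f' m - f' xk‖^2 := by field_simp
    linarith [he ▸ h']
  have T3 : δ*L*(f xk + ⟪f' xk, xstar - xk⟫) + δ/2*‖f' xk‖^2 ≤ δ*L*(f xstar) := by
    have h' := mul_le_mul_of_nonneg_left h3 hδL
    have he : δ*L*(f xk + ⟪f' xk, xstar - xk⟫ + 1/(2*L)*‖f' xk‖^2)
        = δ*L*(f xk + ⟪f' xk, xstar - xk⟫) + δ/2*‖f' xk‖^2 := by field_simp
    linarith [he ▸ h']
  have hRs : δ*L*(dk*⟪f' m, zk - m⟫ + ⟪f' m, xk - m⟫) = δ*L*(δ*⟪f' m, f' xk⟫) := by rw [hR]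
  have hb2 : ‖xk - xstar - δ • f' xk‖^2
      = ‖xk - xstar‖^2 + 2*(δ*⟪f' xk, xstar - xk⟫) + δ^2*‖f' xk‖^2 := by
    rw [norm_sub_sq_real, real_inner_smul_right, norm_smul, Real.norm_eq_abs, mul_pow, sq_abs]
    have hin : ⟪xk - xstar, f' xk⟫ = -⟪f' xk, xstar - xk⟫ := by
      rw [real_inner_comm, show xk - xstar = -(xstar - xk) from by abel, inner_neg_right]
    rw [hin]; ring
  have hB : δ*(dk+1)*L*(f m - f xstar) + L/2*‖xk - xstar - δ • f' xk‖^2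
      ≤ δ*dk*L*(f zk - f xstar) + L/2*‖xk - xstar‖^2 := by
    rw [hb2]
    linarith [T1, T2, T3, hRs, hkey]
  -- final assembly
  have hsz : ∑ i, (f (z1 i) - f xstar) = ∑ i, f (z1 i) - (n:ℝ)*f xstar := by
    rw [Finset.sum_sub_distrib, Finset.sum_const, Finset.card_univ, Fintype.card_fin,
      nsmul_eq_mul]
  have hSV0 : (0:ℝ) ≤ ∑ i, ‖G i - f' xk‖^2 :=
    Finset.sum_nonneg (fun i _ => sq_nonneg _)
  have hNinv : (0:ℝ) ≤ (n:ℝ)⁻¹ := by positivity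
  have e6 : (n:ℝ)⁻¹*((n:ℝ)*f m + L/2*(δ/(dk+1))^2*(∑ i, ‖G i - f' xk‖^2) - (n:ℝ)*f xstar)
      = (f m - f xstar) + L/2*(δ/(dk+1))^2*((n:ℝ)⁻¹*(∑ i, ‖G i - f' xk‖^2)) := by
    field_simp; ring
  have hf1 : (n:ℝ)⁻¹ * ∑ i, (f (z1 i) - f xstar)
      ≤ (f m - f xstar) + L/2*(δ/(dk+1))^2*((n:ℝ)⁻¹*(∑ i, ‖G i - f' xk‖^2)) := by
    rw [hsz, ← e6]
    apply mul_le_mul_of_nonneg_left _ hNinv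
    linarith [hAsum]
  have hf2 : (n:ℝ)⁻¹ * ∑ i, ‖x1 i - xstar‖^2
      = ‖xk - xstar - δ • f' xk‖^2 + δ^2*((n:ℝ)⁻¹*(∑ i, ‖G i - f' xk‖^2)) := by
    rw [hXsum]; field_simp
  have hP1 : δ*(dk+1)*L*((n:ℝ)⁻¹ * ∑ i, (f (z1 i) - f xstar))
      ≤ δ*(dk+1)*L*((f m - f xstar)
          + L/2*(δ/(dk+1))^2*((n:ℝ)⁻¹*(∑ i, ‖G i - f' xk‖^2))) :=
    mul_le_mul_of_nonneg_left hf1 (by positivity)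
  have hiden : δ*(dk+1)*L*(L/2*(δ/(dk+1))^2*((n:ℝ)⁻¹*(∑ i, ‖G i - f' xk‖^2)))
        + L/2*(δ^2*((n:ℝ)⁻¹*(∑ i, ‖G i - f' xk‖^2)))
      = (δ^2/2*(L*(1+dk+L*δ)/(1+dk)))*((n:ℝ)⁻¹*(∑ i, ‖G i - f' xk‖^2)) := by
    field_simp; ring
  have hE : (δ^2/2*(L*(1+dk+L*δ)/(1+dk)))*((n:ℝ)⁻¹*(∑ i, ‖G i - f' xk‖^2))
      ≤ (δ^2/2*(L*(1+dk+L*δ)/(1+dk)))*σ^2 :=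
    mul_le_mul_of_nonneg_left hvar (by positivity)
  have hf2' : L/2 * ((n:ℝ)⁻¹ * ∑ i, ‖x1 i - xstar‖^2)
      = L/2*(‖xk - xstar - δ • f' xk‖^2 + δ^2*((n:ℝ)⁻¹*(∑ i, ‖G i - f' xk‖^2))) := by
    rw [hf2]
  linarith [hP1, hf2', hB, hiden, hE]
end

section
/- Consider primal averaging SGD: y_{k+1} = (d_k/(d_k + δ_k L)) y_k + (δ_k L/(d_k + δ_k L)) x_k and x_{k+1} = x_k - δ_k G(y_{k+1}; i_k). If f is L-smooth convex, the oracle is unbiased with variance ≤ σ² at y_{k+1}, and δ_k ≤ 1/L, then with d_{k+1} = d_k + δ_k L and e_k = L δ_k²/2, one has d_{k+1}(f(y_{k+1}) - f⋆) + (L/2) E_{i_k}‖x_{k+1} - x⋆‖² ≤ d_k (f(y_k) - f⋆) + (L/2)‖x_k - x⋆‖² + e_k σ². -/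
open Finset

open RealInnerProductSpace

section Aux

variable {E : Type*} [NormedAddCommGroup E] [InnerProductSpace ℝ E] [CompleteSpace E]

/-- Derivative of `f` along a line, expressed via the gradient. -/
lemma aux_hasDerivAt_line (f : E → ℝ) (g : E → E) (hg : ∀ z, HasGradientAt f (g z) z)
    (x v : E) (t : ℝ) :
    HasDerivAt (fun s : ℝ => f (x + s • v)) ⟪g (x + t • v), v⟫ t := by
  have h1 : HasDerivAt (fun s : ℝ => x + s • v) v t := by
    simpa using ((hasDerivAt_id t).smul_const v).const_add x
  have h2 := (hasGradientAt_iff_hasFDerivAt.1 (hg (x + t • v))).comp_hasDerivAt t h1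
  simp [InnerProductSpace.toDual_apply_apply] at h2; exact h2

/-- First-order condition for convexity. -/
lemma aux_convex_grad_le (f : E → ℝ) (g : E → E) (hg : ∀ z, HasGradientAt f (g z) z)
    (hconv : ConvexOn ℝ Set.univ f) (x y : E) :
    f y + ⟪g y, x - y⟫ ≤ f x := by
  set φ : ℝ → ℝ := fun s => f (y + s • (x - y)) with hφ
  have hd : HasDerivAt φ ⟪g y, x - y⟫ 0 := by
    simpa using aux_hasDerivAt_line f g hg y (x - y) 0
  have htend : Filter.Tendsto (slope φ 0) (nhdsWithin 0 {(0:ℝ)}ᶜ) (nhds ⟪g y, x - y⟫) :=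
    hasDerivAt_iff_tendsto_slope.1 hd
  have htend' : Filter.Tendsto (slope φ 0) (nhdsWithin 0 (Set.Ioi (0:ℝ)))
      (nhds ⟪g y, x - y⟫) :=
    htend.mono_left (nhdsWithin_mono 0 (fun t ht => ne_of_gt ht))
  have hub : ∀ᶠ t in nhdsWithin 0 (Set.Ioi (0:ℝ)), slope φ 0 t ≤ f x - f y := by
    filter_upwards [Ioo_mem_nhdsGT_of_mem (Set.mem_Ico.2 ⟨le_refl 0, zero_lt_one⟩)] with t ht
    have ht0 : (0:ℝ) < t := ht.1
    have ht1 : t ≤ 1 := le_of_lt ht.2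
    have hseg : y + t • (x - y) = (1 - t) • y + t • x := by module
    have hcv := hconv.2 (Set.mem_univ y) (Set.mem_univ x) (by linarith : (0:ℝ) ≤ 1 - t)
      (le_of_lt ht0) (by ring)
    have hφt : φ t ≤ (1 - t) * f y + t * f x := by
      rw [hφ]; simp only []; rw [hseg]; simpa using hcv
    have hφ0 : φ 0 = f y := by simp [hφ]
    rw [slope_def_field, hφ0, sub_zero, div_le_iff₀ ht0]
    nlinarith
  have hfin := le_of_tendsto htend' hub
  linarith

/-- Descent lemma for `L`-smooth functions. -/
lemma aux_descent (L : ℝ) (hL : 0 < L) (f : E → ℝ) (g : E → E)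
    (hg : ∀ z, HasGradientAt f (g z) z)
    (hlip : ∀ u w, ‖g u - g w‖ ≤ L * ‖u - w‖) (x v : E) :
    f (x + v) ≤ f x + ⟪g x, v⟫ + L / 2 * ‖v‖ ^ 2 := by
  set ψ : ℝ → ℝ := fun t => f (x + t • v) - t * ⟪g x, v⟫ - L / 2 * ‖v‖ ^ 2 * t ^ 2 with hψ
  have hψd : ∀ t : ℝ, HasDerivAt ψ
      (⟪g (x + t • v), v⟫ - ⟪g x, v⟫ - L / 2 * ‖v‖ ^ 2 * (2 * t)) t := by
    intro t
    have h1 := aux_hasDerivAt_line f g hg x v t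
    have h2 : HasDerivAt (fun t : ℝ => t * ⟪g x, v⟫) ⟪g x, v⟫ t := by
      simpa using (hasDerivAt_id t).mul_const ⟪g x, v⟫
    have h3 : HasDerivAt (fun t : ℝ => L / 2 * ‖v‖ ^ 2 * t ^ 2)
        (L / 2 * ‖v‖ ^ 2 * (2 * t)) t := by
      convert (hasDerivAt_pow 2 t).const_mul (L / 2 * ‖v‖ ^ 2) using 1
      exacts [rfl, rfl, by norm_num]
    exact (h1.sub h2).sub h3
  have hdiff : Differentiable ℝ ψ := fun t => (hψd t).differentiableAt
  have hanti : AntitoneOn ψ (Set.Icc (0:ℝ) 1) := by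
    apply antitoneOn_of_deriv_nonpos (convex_Icc 0 1) hdiff.continuous.continuousOn
      hdiff.differentiableOn
    intro t ht
    rw [interior_Icc] at ht
    rw [(hψd t).deriv]
    have h1 : ⟪g (x + t • v) - g x, v⟫ ≤ ‖g (x + t • v) - g x‖ * ‖v‖ :=
      real_inner_le_norm _ _
    have h2 : ‖g (x + t • v) - g x‖ ≤ L * (t * ‖v‖) := by
      have := hlip (x + t • v) x
      simpa [norm_smul, abs_of_nonneg (le_of_lt ht.1)] using this
    have h3 : ⟪g (x + t • v) - g x, v⟫ = ⟪g (x + t • v), v⟫ - ⟪g x, v⟫ :=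
      inner_sub_left _ _ _
    nlinarith [norm_nonneg v, norm_nonneg (g (x + t • v) - g x), ht.1.le]
  have h01 := hanti (Set.left_mem_Icc.2 zero_le_one) (Set.right_mem_Icc.2 zero_le_one)
    zero_le_one
  have hψ0 : ψ 0 = f x := by simp [hψ]
  have hψ1 : ψ 1 = f (x + v) - ⟪g x, v⟫ - L / 2 * ‖v‖ ^ 2 := by simp [hψ]
  rw [hψ0, hψ1] at h01
  linarith

/-- Interpolation inequality for convex `L`-smooth functions. -/
lemma aux_interp (L : ℝ) (hL : 0 < L) (f : E → ℝ) (g : E → E)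
    (hg : ∀ z, HasGradientAt f (g z) z) (hconv : ConvexOn ℝ Set.univ f)
    (hlip : ∀ u w, ‖g u - g w‖ ≤ L * ‖u - w‖) (x y : E) :
    f y + ⟪g y, x - y⟫ + 1 / (2 * L) * ‖g x - g y‖ ^ 2 ≤ f x := by
  set c := g y with hc
  set h : E → ℝ := fun z => f z - ⟪c, z⟫ with hh
  set h' : E → E := fun z => g z - c with hh'
  have hg' : ∀ z, HasGradientAt h (h' z) z := by
    intro z
    rw [hasGradientAt_iff_hasFDerivAt]
    have h1 := hasGradientAt_iff_hasFDerivAt.1 (hg z)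
    have h3 := h1.sub ((InnerProductSpace.toDual ℝ E c).hasFDerivAt (x := z))
    have e1 : (f - ⇑(InnerProductSpace.toDual ℝ E c)) = h := by
      funext w; simp [hh, InnerProductSpace.toDual_apply_apply]
    have e2 : InnerProductSpace.toDual ℝ E (h' z)
        = InnerProductSpace.toDual ℝ E (g z) - InnerProductSpace.toDual ℝ E c := by
      rw [hh']; simp
    rw [e2]
    rw [e1] at h3
    exact h3
  have hlip' : ∀ u w, ‖h' u - h' w‖ ≤ L * ‖u - w‖ := by
    intro u w
    have e : h' u - h' w = g u - g w := by simp only [hh', sub_sub_sub_cancel_right]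
    rw [e]; exact hlip u w
  have hminy : ∀ z, h y ≤ h z := by
    intro z
    have h1 := aux_convex_grad_le f g hg hconv z y
    have h2 : ⟪c, z - y⟫ = ⟪c, z⟫ - ⟪c, y⟫ := inner_sub_right _ _ _
    simp only [hh]
    rw [hc] at h2 ⊢
    linarith
  set w : E := -((1 / L) • (g x - c)) with hw
  have hdesc := aux_descent L hL h h' hg' hlip' x w
  have hmin := hminy (x + w)
  have e3 : ⟪h' x, w⟫ = -(1 / L) * ‖g x - c‖ ^ 2 := by
    rw [hw, hh']
    rw [inner_neg_right, real_inner_smul_right, real_inner_self_eq_norm_sq]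
    ring
  have e4 : ‖w‖ ^ 2 = (1 / L) ^ 2 * ‖g x - c‖ ^ 2 := by
    rw [hw, norm_neg, norm_smul, Real.norm_eq_abs, abs_of_nonneg (by positivity : (0:ℝ) ≤ 1 / L)]
    ring
  have e6 : ⟪c, x - y⟫ = ⟪c, x⟫ - ⟪c, y⟫ := inner_sub_right _ _ _
  have hhx : h x = f x - ⟪c, x⟫ := rfl
  have hhy : h y = f y - ⟪c, y⟫ := rfl
  rw [e3, e4] at hdesc
  rw [hc] at e6
  have hchain : h y ≤ h x + -(1 / L) * ‖g x - c‖ ^ 2 + L / 2 * ((1 / L) ^ 2 * ‖g x - c‖ ^ 2) :=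
    le_trans hmin hdesc
  rw [hhx, hhy] at hchain
  have e7 : -(1 / L) * ‖g x - c‖ ^ 2 + L / 2 * ((1 / L) ^ 2 * ‖g x - c‖ ^ 2)
      = -(1 / (2 * L) * ‖g x - c‖ ^ 2) := by
    field_simp
    ring
  rw [hc] at e7 hchain ⊢
  linarith [e7, e6, hchain]

end Aux

set_option maxHeartbeats 1000000 in
/-- One-step potential inequality for SGD with primal averaging. -/
theorem sgd_primal_averaging_potential_decrease {d n : ℕ} (hn : 0 < n)
    (L σ : ℝ) (hL : 0 < L)
    (f : EuclideanSpace ℝ (Fin d) → ℝ)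
    (f' : EuclideanSpace ℝ (Fin d) → EuclideanSpace ℝ (Fin d))
    (hgrad : ∀ x, HasGradientAt f (f' x) x)
    (hconv : ConvexOn ℝ Set.univ f)
    (hsmooth : ∀ x y, ‖f' x - f' y‖ ≤ L * ‖x - y‖)
    (xstar : EuclideanSpace ℝ (Fin d)) (hmin : ∀ y, f xstar ≤ f y)
    (δ dk : ℝ) (hδ0 : 0 ≤ δ) (hδ1 : δ ≤ 1 / L) (hdk : 0 ≤ dk)
    (xk yk y1 : EuclideanSpace ℝ (Fin d))
    (hy1 : y1 = (dk / (dk + δ * L)) • yk + (δ * L / (dk + δ * L)) • xk)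
    (G : Fin n → EuclideanSpace ℝ (Fin d))
    (hunbiased : (n : ℝ)⁻¹ • (∑ i, G i) = f' y1)
    (hvar : (n : ℝ)⁻¹ * (∑ i, ‖G i - f' y1‖ ^ 2) ≤ σ ^ 2)
    (x1 : Fin n → EuclideanSpace ℝ (Fin d))
    (hx1 : ∀ i, x1 i = xk - δ • G i) :
    (dk + δ * L) * (f y1 - f xstar)
        + L / 2 * ((n : ℝ)⁻¹ * ∑ i, ‖x1 i - xstar‖ ^ 2)
      ≤ dk * (f yk - f xstar) + L / 2 * ‖xk - xstar‖ ^ 2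
        + (L * δ ^ 2 / 2) * σ ^ 2 := by
  have hnR : (0:ℝ) < (n : ℝ) := by exact_mod_cast hn
  have hnne : (n : ℝ) ≠ 0 := ne_of_gt hnR
  -- Case δ = 0
  by_cases hδz : δ = 0
  · subst hδz
    have hsame : ∀ i, x1 i = xk := by intro i; rw [hx1 i]; simp
    have hsum : (n : ℝ)⁻¹ * ∑ i, ‖x1 i - xstar‖ ^ 2 = ‖xk - xstar‖ ^ 2 := by
      have : ∑ i : Fin n, ‖x1 i - xstar‖ ^ 2 = (n : ℝ) * ‖xk - xstar‖ ^ 2 := by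
        rw [Finset.sum_congr rfl (fun i _ => by rw [hsame i])]
        rw [Finset.sum_const, Finset.card_univ, Fintype.card_fin, nsmul_eq_mul]
      rw [this, ← mul_assoc, inv_mul_cancel₀ hnne, one_mul]
    rw [hsum]
    have hterm : dk * (f y1 - f xstar) ≤ dk * (f yk - f xstar) := by
      rcases eq_or_lt_of_le hdk with h | h
      · rw [← h]; simp
      · have : y1 = yk := by
          rw [hy1]; simp [div_self (ne_of_gt h)]
        rw [this]
      
    simp only [zero_mul, mul_zero, add_zero, zero_pow, mul_zero] at *
    nlinarith [hterm]
  · have hδ : 0 < δ := lt_of_le_of_ne hδ0 (Ne.symm hδz)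
    set gy := f' y1 with hgy
    -- gradient at the minimizer vanishes
    have hstar0 : f' xstar = 0 := by
      have hlocmin : IsLocalMin f xstar := Filter.Eventually.of_forall hmin
      have h0 := hlocmin.hasFDerivAt_eq_zero (hasGradientAt_iff_hasFDerivAt.1 (hgrad xstar))
      have := congrArg (fun T => (InnerProductSpace.toDual ℝ _).symm T) h0
      simpa using this
    -- abbreviations
    set a := f y1 - f xstar with ha
    set P := ⟪gy, yk - y1⟫ with hP
    set Q := ⟪gy, xk - xstar⟫ with hQ
    set R := ⟪gy, y1 - xstar⟫ with hR
    set Ng := ‖gy‖ ^ 2 with hNg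
    set Nx := ‖xk - xstar‖ ^ 2 with hNx
    set S := (n : ℝ)⁻¹ * ∑ i, ‖G i‖ ^ 2 with hSdef
    -- variance bound : S ≤ σ² + Ng
    have hsum_var : ∑ i, ‖G i - gy‖ ^ 2
        = (∑ i, ‖G i‖ ^ 2) - 2 * ⟪∑ i, G i, gy⟫ + (n : ℝ) * Ng := by
      have expand : ∀ i : Fin n, ‖G i - gy‖ ^ 2
          = ‖G i‖ ^ 2 - 2 * ⟪G i, gy⟫ + Ng := fun i => by
        rw [hNg]
        exact norm_sub_sq_real _ _
      rw [Finset.sum_congr rfl (fun i _ => expand i), Finset.sum_add_distrib,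
        Finset.sum_sub_distrib, Finset.sum_const, Finset.card_univ, Fintype.card_fin,
        nsmul_eq_mul, ← Finset.mul_sum, sum_inner]
    have e2 : (n : ℝ)⁻¹ * ⟪∑ i, G i, gy⟫ = Ng := by
      rw [← real_inner_smul_left, hunbiased, real_inner_self_eq_norm_sq]
    have hninv : (n : ℝ)⁻¹ * (n : ℝ) = 1 := inv_mul_cancel₀ hnne
    have hS : S - Ng ≤ σ ^ 2 := by
      have hveq : (n : ℝ)⁻¹ * (∑ i, ‖G i - gy‖ ^ 2) = S - Ng := by
        linear_combination (n : ℝ)⁻¹ * hsum_var - hSdef - 2 * e2 + Ng * hninv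
      linarith [hvar, hveq]
    -- expansion of the averaged distance
    have hA : (n : ℝ)⁻¹ * ∑ i, ‖x1 i - xstar‖ ^ 2
        = Nx - 2 * δ * Q + δ ^ 2 * S := by
      have expand : ∀ i : Fin n, ‖x1 i - xstar‖ ^ 2
          = Nx - 2 * δ * ⟪xk - xstar, G i⟫ + δ ^ 2 * ‖G i‖ ^ 2 := fun i => by
        have e : x1 i - xstar = (xk - xstar) - δ • G i := by rw [hx1 i]; abel
        rw [hNx, e, norm_sub_sq_real, real_inner_smul_right, norm_smul, Real.norm_eq_abs,
          abs_of_nonneg hδ0]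
        ring
      have hsum2 : ∑ i, ‖x1 i - xstar‖ ^ 2
          = (n : ℝ) * Nx - 2 * δ * ⟪xk - xstar, ∑ i, G i⟫
            + δ ^ 2 * ∑ i, ‖G i‖ ^ 2 := by
        rw [Finset.sum_congr rfl (fun i _ => expand i), Finset.sum_add_distrib,
          Finset.sum_sub_distrib, Finset.sum_const, Finset.card_univ, Fintype.card_fin,
          nsmul_eq_mul, ← Finset.mul_sum, ← Finset.mul_sum, inner_sum]
      have e3 : (n : ℝ)⁻¹ * ⟪xk - xstar, ∑ i, G i⟫ = Q := by
        rw [← real_inner_smul_right, hunbiased, real_inner_comm]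
      linear_combination (n : ℝ)⁻¹ * hsum2 + Nx * hninv - 2 * δ * e3 - δ ^ 2 * hSdef
    -- key combination identity
    have hDpos : 0 < dk + δ * L := add_pos_of_nonneg_of_pos hdk (mul_pos hδ hL)
    have hDne : dk + δ * L ≠ 0 := ne_of_gt hDpos
    have h1 : (dk + δ * L) • y1 = dk • yk + (δ * L) • xk := by
      rw [hy1, smul_add, smul_smul, smul_smul]
      have ea : (dk + δ * L) * (dk / (dk + δ * L)) = dk := by field_simp
      have eb : (dk + δ * L) * (δ * L / (dk + δ * L)) = δ * L := by field_simp
      rw [ea, eb]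
    have hcomb : dk • (yk - y1) + (δ * L) • (xk - y1) = (0 : EuclideanSpace ℝ (Fin d)) := by
      have e : dk • (yk - y1) + (δ * L) • (xk - y1)
          = dk • yk + (δ * L) • xk - (dk + δ * L) • y1 := by module
      rw [e, h1, sub_self]
    have hkey : dk * P + δ * L * (Q - R) = 0 := by
      have h2 : ⟪gy, dk • (yk - y1) + (δ * L) • (xk - y1)⟫ = 0 := by
        rw [hcomb, inner_zero_right]
      rw [inner_add_right, real_inner_smul_right, real_inner_smul_right] at h2
      have h3 : ⟪gy, xk - y1⟫ = Q - R := by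
        have e : xk - y1 = (xk - xstar) - (y1 - xstar) := by abel
        rw [e, inner_sub_right, ← hQ, ← hR]
      rw [← hP, h3] at h2
      linarith
    -- convexity at yk
    have hi := aux_convex_grad_le f f' hgrad hconv yk y1
    have hi' : dk * (f y1 + P) ≤ dk * f yk := by
      apply mul_le_mul_of_nonneg_left _ hdk
      rw [hP, hgy]
      exact hi
    -- interpolation at xstar
    have hii := aux_interp L hL f f' hgrad hconv hsmooth xstar y1
    rw [hstar0] at hii
    have hii' : f y1 - R + 1 / (2 * L) * Ng ≤ f xstar := by
      have e : ⟪f' y1, xstar - y1⟫ = -R := by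
        rw [hR, hgy, ← inner_neg_right, neg_sub]
      rw [e] at hii
      have e2 : ‖(0 : EuclideanSpace ℝ (Fin d)) - f' y1‖ ^ 2 = Ng := by
        rw [zero_sub, norm_neg, hNg, hgy]
      rw [e2] at hii
      linarith
    -- multiply interpolation by δ * L
    have hmul : δ * L * (f y1 - R + 1 / (2 * L) * Ng) ≤ δ * L * f xstar :=
      mul_le_mul_of_nonneg_left hii' (mul_nonneg hδ0 hL.le)
    have escal : δ * L * (1 / (2 * L)) = δ / 2 := by field_simp
    have hmul' : δ * L * f y1 - δ * L * R + δ / 2 * Ng ≤ δ * L * f xstar := by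
      nlinarith [hmul]
    -- δ - L δ² ≥ 0
    have hLd : δ * L ≤ 1 := by
      rw [le_div_iff₀ hL] at hδ1
      exact hδ1
    have hF5 : (δ - L * δ ^ 2) * Ng ≥ 0 := by
      apply mul_nonneg
      · nlinarith
      · positivity
    -- scaled variance
    have hF4 : (L * δ ^ 2 / 2) * S ≤ (L * δ ^ 2 / 2) * (σ ^ 2 + Ng) := by
      apply mul_le_mul_of_nonneg_left _ (by positivity)
      linarith
    rw [hA]
    linarith [hi', hmul', hkey, hF4, hF5, ha]
end

section
/- Let f be L-smooth convex and let G be an unbiased stochastic oracle satisfying the weak growth condition E_i‖G(x;i)‖² ≤ 2ρL(f(x) - f⋆) for all x, with ρ ≥ 1. For the primal averaging scheme y_{k+1} = (d_k/(d_k + δ_k L)) y_k + (δ_k L/(d_k + δ_k L)) x_k, x_{k+1} = x_k - δ_k G(y_{k+1}; i_k), with d_{k+1} = d_k + δ_k L - ρ δ_k² L², one has d_{k+1}(f(y_{k+1}) - f⋆) + (L/2) E_{i_k}‖x_{k+1} - x⋆‖² ≤ d_k (f(y_k) - f⋆) + (L/2)‖x_k - x⋆‖². -/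
open Finset

lemma convex_grad_ineq {E : Type*} [NormedAddCommGroup E] [InnerProductSpace ℝ E]
    [CompleteSpace E]
    {f : E → ℝ} (hconv : ConvexOn ℝ Set.univ f) {x g : E} (hg : HasGradientAt f g x)
    (y : E) : f x + inner ℝ g (y - x) ≤ f y := by
  have hline : HasDerivAt (fun t : ℝ => x + t • (y - x)) (y - x) 0 := by
    simpa using ((hasDerivAt_id (0:ℝ)).smul_const (y - x)).const_add x
  have hd : HasDerivAt (fun t : ℝ => f (x + t • (y - x))) (inner ℝ g (y - x) : ℝ) 0 := by
    have hg' : HasFDerivAt f ((InnerProductSpace.toDual ℝ E) g) (x + (0:ℝ) • (y - x)) := by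
      simpa using hg.hasFDerivAt
    have h2 := hg'.comp_hasDerivAt 0 hline
    simp only [InnerProductSpace.toDual_apply_apply] at h2
    exact h2
  have hslope : ∀ t ∈ Set.Ioc (0:ℝ) 1,
      slope (fun t : ℝ => f (x + t • (y - x))) 0 t ≤ f y - f x := by
    intro t ht
    have hc := hconv.2 (Set.mem_univ x) (Set.mem_univ y)
      (by linarith [ht.1, ht.2] : (0:ℝ) ≤ 1 - t) (le_of_lt ht.1) (by ring)
    have hxy : x + t • (y - x) = (1 - t) • x + t • y := by
      rw [smul_sub, sub_smul, one_smul]; abel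
    rw [slope_def_field]
    rw [div_le_iff₀ (by linarith [ht.1])]
    simp only [zero_smul, add_zero, sub_zero, hxy]
    simp only [smul_eq_mul] at hc
    nlinarith [hc]
  have htend : Filter.Tendsto (slope (fun t : ℝ => f (x + t • (y - x))) 0)
      (nhdsWithin 0 (Set.Ioi 0)) (nhds (inner ℝ g (y - x) : ℝ)) := by
    have := hasDerivAt_iff_tendsto_slope.mp hd
    exact this.mono_left (nhdsWithin_mono _ (fun t ht => Set.mem_compl_singleton_iff.mpr (ne_of_gt ht)))
  have : (inner ℝ g (y - x) : ℝ) ≤ f y - f x := by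
    refine le_of_tendsto htend ?_
    filter_upwards [Ioc_mem_nhdsGT_of_mem (Set.mem_Ico.mpr ⟨le_refl 0, one_pos⟩)] with t ht
    exact hslope t ht
  linarith

/-- One-step potential inequality for primal-averaging SGD under the weak
growth condition `E_i ‖G(x;i)‖² ≤ 2ρL (f(x) - f⋆)`. -/
theorem weak_growth_primal_averaging_potential {d n : ℕ} (hn : 0 < n)
    (L ρ : ℝ) (hL : 0 < L) (hρ : 1 ≤ ρ)
    (f : EuclideanSpace ℝ (Fin d) → ℝ)
    (f' : EuclideanSpace ℝ (Fin d) → EuclideanSpace ℝ (Fin d))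
    (hgrad : ∀ x, HasGradientAt f (f' x) x)
    (hconv : ConvexOn ℝ Set.univ f)
    (hsmooth : ∀ x y, ‖f' x - f' y‖ ≤ L * ‖x - y‖)
    (xstar : EuclideanSpace ℝ (Fin d)) (hmin : ∀ y, f xstar ≤ f y)
    (G : EuclideanSpace ℝ (Fin d) → Fin n → EuclideanSpace ℝ (Fin d))
    (hunbiased : ∀ x, (n : ℝ)⁻¹ • (∑ i, G x i) = f' x)
    (hwg : ∀ x, (n : ℝ)⁻¹ * (∑ i, ‖G x i‖ ^ 2) ≤ 2 * ρ * L * (f x - f xstar))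
    (δ dk : ℝ) (hδ : 0 ≤ δ) (hdk : 0 ≤ dk)
    (xk yk y1 : EuclideanSpace ℝ (Fin d))
    (hy1 : y1 = (dk / (dk + δ * L)) • yk + (δ * L / (dk + δ * L)) • xk)
    (x1 : Fin n → EuclideanSpace ℝ (Fin d))
    (hx1 : ∀ i, x1 i = xk - δ • G y1 i) :
    (dk + δ * L - ρ * δ ^ 2 * L ^ 2) * (f y1 - f xstar)
        + L / 2 * ((n : ℝ)⁻¹ * ∑ i, ‖x1 i - xstar‖ ^ 2)
      ≤ dk * (f yk - f xstar) + L / 2 * ‖xk - xstar‖ ^ 2 := by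
  have hn' : (0:ℝ) < n := by exact_mod_cast hn
  set g := f' y1 with hgdef
  -- expansion of each squared norm
  have hterm : ∀ i, ‖x1 i - xstar‖^2 = ‖xk - xstar‖^2
      - 2*δ*(inner ℝ (G y1 i) (xk - xstar) : ℝ) + δ^2 * ‖G y1 i‖^2 := by
    intro i
    have hv : x1 i - xstar = (xk - xstar) - δ • G y1 i := by rw [hx1 i]; abel
    rw [hv, norm_sub_sq_real, real_inner_smul_right, norm_smul]
    simp only [Real.norm_eq_abs]
    rw [mul_pow, sq_abs, real_inner_comm]
    ring
  have hinner_sum : (n:ℝ)⁻¹ * (∑ i, (inner ℝ (G y1 i) (xk - xstar) : ℝ))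
      = (inner ℝ g (xk - xstar) : ℝ) := by
    rw [hgdef, ← hunbiased y1, real_inner_smul_left, sum_inner]
  have hsum : (n:ℝ)⁻¹ * ∑ i, ‖x1 i - xstar‖^2
      = ‖xk - xstar‖^2 - 2*δ*(inner ℝ g (xk - xstar) : ℝ)
        + δ^2 * ((n:ℝ)⁻¹ * ∑ i, ‖G y1 i‖^2) := by
    simp_rw [hterm]
    rw [Finset.sum_add_distrib, Finset.sum_sub_distrib, Finset.sum_const,
      Finset.card_univ, Fintype.card_fin, ← Finset.mul_sum, ← Finset.mul_sum,
      nsmul_eq_mul]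
    have hinv : (n:ℝ)⁻¹ * (n:ℝ) = 1 := inv_mul_cancel₀ (ne_of_gt hn')
    linear_combination ‖xk - xstar‖^2 * hinv - 2*δ*hinner_sum
  rw [hsum]
  have hA : 0 ≤ f y1 - f xstar := by linarith [hmin y1]
  rcases eq_or_lt_of_le (add_nonneg hdk (mul_nonneg hδ hL.le)) with hcase | hpos
  · -- degenerate: dk = 0 and δ = 0
    have hδ0 : δ = 0 := by nlinarith [mul_nonneg hδ hL.le]
    have hdk0 : dk = 0 := by nlinarith [mul_nonneg hδ hL.le]
    subst hδ0; subst hdk0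
    simp
  · -- main case
    have hne : dk + δ * L ≠ 0 := ne_of_gt hpos
    have hcomb : dk • yk + (δ*L) • xk = (dk + δ*L) • y1 := by
      rw [hy1, smul_add, smul_smul, smul_smul]
      rw [mul_div_cancel₀ _ hne, mul_div_cancel₀ _ hne]
    have hvec : dk • (yk - y1) + (δ*L) • (xk - y1) = 0 := by
      have : dk • (yk - y1) + (δ*L) • (xk - y1)
          = (dk • yk + (δ*L) • xk) - (dk + δ*L) • y1 := by
        rw [add_smul, smul_sub, smul_sub]; abel
      rw [this, hcomb, sub_self]
    have hzero : dk * (inner ℝ g (yk - y1) : ℝ) + (δ*L) * (inner ℝ g (xk - y1) : ℝ) = 0 := by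
      have h2 := congrArg (fun v => (inner ℝ g v : ℝ)) hvec
      simp only [inner_add_right, real_inner_smul_right, inner_zero_right] at h2
      exact h2
    have c1 : f y1 + (inner ℝ g (yk - y1) : ℝ) ≤ f yk :=
      convex_grad_ineq hconv (hgrad y1) yk
    have c2 : f y1 + (inner ℝ g (xstar - y1) : ℝ) ≤ f xstar :=
      convex_grad_ineq hconv (hgrad y1) xstar
    have c2' : f y1 - (inner ℝ g (y1 - xstar) : ℝ) ≤ f xstar := by
      have : (inner ℝ g (xstar - y1) : ℝ) = -(inner ℝ g (y1 - xstar) : ℝ) := by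
        rw [← inner_neg_right, neg_sub]
      linarith [c2, this.symm.le, this.le]
    have hsplit : (inner ℝ g (xk - xstar) : ℝ)
        = (inner ℝ g (xk - y1) : ℝ) + (inner ℝ g (y1 - xstar) : ℝ) := by
      rw [← inner_add_right, sub_add_sub_cancel]
    have m1 : dk * (f y1 + (inner ℝ g (yk - y1) : ℝ)) ≤ dk * f yk :=
      mul_le_mul_of_nonneg_left c1 hdk
    have m2 : (δ*L) * (f y1 - (inner ℝ g (y1 - xstar) : ℝ)) ≤ (δ*L) * f xstar :=
      mul_le_mul_of_nonneg_left c2' (mul_nonneg hδ hL.le)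
    have m3 : L/2*δ^2 * ((n:ℝ)⁻¹ * ∑ i, ‖G y1 i‖^2)
        ≤ L/2*δ^2 * (2 * ρ * L * (f y1 - f xstar)) :=
      mul_le_mul_of_nonneg_left (hwg y1) (by positivity)
    have hsplit' : (δ*L) * (inner ℝ g (xk - xstar) : ℝ)
        = (δ*L) * (inner ℝ g (xk - y1) : ℝ) + (δ*L) * (inner ℝ g (y1 - xstar) : ℝ) := by
      rw [hsplit]; ring
    linarith [m1, m2, m3, hzero, hsplit']
end
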